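/- arXiv:1101.4504 — 13 statements merged into one kernel-verified Lean document; each statement's English description precedes it below -/
import Mathlib

section
/- If H is a subgroup of countable index in a topological group G that is a Baire space, then H (with the subspace topology) is a Baire space. -/
open Set Pointwise

/-- Baire property relative to an open set: countably many open sets each dense in an open
set `U` have intersection dense in `U`. -/
lemma aux_baire_rel {G : Type*} [TopologicalSpace G] [BaireSpace G] {ι : Type*} [Countable ι]
    {U : Set G} (hU : IsOpen U) {V : ι → Set G} (hVo : ∀ i, IsOpen (V i))
    (hVd : ∀ i, U ⊆ closure (V i ∩ U)) {O : Set G} (hO : IsOpen O)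
    (hne : (O ∩ U).Nonempty) : (O ∩ U ∩ ⋂ i, V i).Nonempty := by
  set W : ι → Set G := fun i => (V i ∩ U) ∪ (closure U)ᶜ with hW
  have hWo : ∀ i, IsOpen (W i) := fun i =>
    ((hVo i).inter hU).union isClosed_closure.isOpen_compl
  have hWd : ∀ i, Dense (W i) := by
    intro i
    rw [dense_iff_closure_eq, Set.eq_univ_iff_forall]
    intro x
    by_cases hx : x ∈ closure U
    · have : closure U ⊆ closure (W i) := by
        calc closure U ⊆ closure (closure (V i ∩ U)) := closure_mono (hVd i)
        _ = closure (V i ∩ U) := closure_closure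
        _ ⊆ closure (W i) := closure_mono subset_union_left
      exact this hx
    · exact subset_closure (Or.inr hx)
  have hdense : Dense (⋂ i, W i) := dense_iInter_of_isOpen hWo hWd
  obtain ⟨z, hz⟩ := hdense.inter_open_nonempty (O ∩ U) (hO.inter hU) hne
  refine ⟨z, hz.1, fun s hs => ?_⟩
  obtain ⟨i, rfl⟩ := hs
  rcases mem_iInter.mp hz.2 i with h | h
  · exact h.1
  · exact absurd (subset_closure hz.1.2) h

lemma aux_out {G : Type*} [Group G] (H : Subgroup G) (g : G) :
    (Quotient.out (QuotientGroup.mk g : G ⧸ H))⁻¹ * g ∈ H :=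
  QuotientGroup.eq.mp (QuotientGroup.out_eq' (QuotientGroup.mk g : G ⧸ H))

/-- The topological closure of a countable-index subgroup of a Baire group is open. -/
lemma aux_closure_open {G : Type*} [Group G] [TopologicalSpace G] [IsTopologicalGroup G]
    [BaireSpace G] (H : Subgroup G) (hcount : Countable (G ⧸ H)) :
    IsOpen (H.topologicalClosure : Set G) := by
  set C : Set G := (H.topologicalClosure : Set G) with hC
  have hCc : IsClosed C := H.isClosed_topologicalClosure
  have hcov : ⋃ q : G ⧸ H, (Quotient.out q) • C = univ := by
    rw [Set.eq_univ_iff_forall]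
    intro g
    refine mem_iUnion.mpr ⟨QuotientGroup.mk g, ?_⟩
    rw [Set.mem_smul_set_iff_inv_smul_mem, smul_eq_mul]
    exact H.le_topologicalClosure (aux_out H g)
  obtain ⟨q, x, hx⟩ := nonempty_interior_of_iUnion_of_closed
    (fun q : G ⧸ H => (hCc.smul (Quotient.out q))) hcov
  rw [interior_smul, Set.mem_smul_set_iff_inv_smul_mem] at hx
  exact Subgroup.isOpen_of_mem_nhds H.topologicalClosure
    (mem_nhds_iff.mpr ⟨interior C, interior_subset, isOpen_interior, hx⟩)

/-- Main lemma, identity-based version. -/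
lemma aux_main1 {G : Type*} [Group G] [TopologicalSpace G] [IsTopologicalGroup G]
    [BaireSpace G] (H : Subgroup G) (hcount : Countable (G ⧸ H)) (V : ℕ → Set G)
    (hVo : ∀ n, IsOpen (V n)) (hVd : ∀ n, (H : Set G) ⊆ closure (V n ∩ H))
    (O : Set G) (hO : IsOpen O) (hxO : (1 : G) ∈ O) :
    ∃ y, y ∈ H ∧ y ∈ O ∧ ∀ n, y ∈ V n := by
  classical
  set K := H.topologicalClosure with hK
  set C : Set G := (K : Set G) with hC
  have hHC : (H : Set G) ⊆ C := H.le_topologicalClosure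
  have hCopen : IsOpen C := aux_closure_open H hcount
  -- find P open nbhd of 1 with P⁻¹ * P ⊆ O
  obtain ⟨P₀, hP₀o, hP₀1, hP₀⟩ := exists_open_nhds_one_mul_subset (hO.mem_nhds hxO)
  set P : Set G := P₀ ∩ P₀⁻¹ with hP
  have hPo : IsOpen P := hP₀o.inter hP₀o.inv
  have hP1 : (1 : G) ∈ P := ⟨hP₀1, by simpa using hP₀1⟩
  have hPmul : ∀ a b : G, a ∈ P → b ∈ P → a⁻¹ * b ∈ O := fun a b ha hb =>
    hP₀ (Set.mul_mem_mul (by simpa using ha.2) hb.1)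
  -- the closure of V n ∩ H contains C
  have hclC : ∀ n, C ⊆ closure (V n ∩ (H : Set G)) := fun n =>
    closure_minimal (hVd n) isClosed_closure
  -- index: cosets contained in C
  set ι := {q : G ⧸ H // (Quotient.out q) ∈ K} with hι
  -- choose representatives in P
  have hrep : ∀ i : ι, ∃ g, g ∈ P ∧ (Quotient.out i.1)⁻¹ * g ∈ H := by
    intro i
    have hdense : C ⊆ closure ((Quotient.out i.1) • (H : Set G)) := by
      rw [closure_smul]
      intro c hc
      rw [Set.mem_smul_set_iff_inv_smul_mem, smul_eq_mul]
      exact K.mul_mem (K.inv_mem i.2) hc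
    have h1 : (1 : G) ∈ closure ((Quotient.out i.1) • (H : Set G)) := hdense K.one_mem
    rcases mem_closure_iff.mp h1 P hPo hP1 with ⟨g, hgP, hg⟩
    rw [Set.mem_smul_set_iff_inv_smul_mem, smul_eq_mul] at hg
    exact ⟨g, hgP, hg⟩
  choose g hgP hgH using hrep
  have hgK : ∀ i : ι, g i ∈ K := by
    intro i
    have : Quotient.out i.1 * ((Quotient.out i.1)⁻¹ * g i) ∈ K :=
      K.mul_mem i.2 (hHC (hgH i))
    simpa using this
  -- Baire application inside C
  have hCd : ∀ p : ι × ℕ, C ⊆ closure ((g p.1 • V p.2) ∩ C) := by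
    rintro ⟨i, n⟩
    have hsub : g i • (V n ∩ (H : Set G)) ⊆ (g i • V n) ∩ C := by
      rintro _ ⟨z, ⟨hz1, hz2⟩, rfl⟩
      exact ⟨⟨z, hz1, rfl⟩, K.mul_mem (hgK i) (hHC hz2)⟩
    intro c hc
    have : c ∈ g i • closure (V n ∩ (H : Set G)) := by
      rw [Set.mem_smul_set_iff_inv_smul_mem, smul_eq_mul]
      exact hclC n (K.mul_mem (K.inv_mem (hgK i)) hc)
    rw [← closure_smul] at this
    exact closure_mono hsub this
  have hne : (P ∩ C).Nonempty := ⟨1, hP1, K.one_mem⟩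
  obtain ⟨y, ⟨hyP, hyC⟩, hyV⟩ := aux_baire_rel hCopen
    (fun p : ι × ℕ => (hVo p.2).smul (g p.1)) hCd hPo hne
  -- y is in some coset indexed by ι
  set q : G ⧸ H := QuotientGroup.mk y with hq
  have hyq : y⁻¹ * Quotient.out q ∈ H := by
    have := aux_out H y
    simpa using H.inv_mem this
  have houtK : Quotient.out q ∈ K := by
    have : y * (y⁻¹ * Quotient.out q) ∈ K := K.mul_mem hyC (hHC hyq)
    simpa using this
  set i : ι := ⟨q, houtK⟩ with hi
  have hyH : (g i)⁻¹ * y ∈ H := by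
    have h1 : (Quotient.out q)⁻¹ * g i ∈ H := hgH i
    have h2 : (Quotient.out q)⁻¹ * y ∈ H := by
      have := H.inv_mem hyq
      simpa using this
    have := H.mul_mem (H.inv_mem h1) h2
    simpa [mul_assoc] using this
  refine ⟨(g i)⁻¹ * y, hyH, hPmul _ _ (hgP i) hyP, fun n => ?_⟩
  have := mem_iInter.mp hyV (i, n)
  rw [Set.mem_smul_set_iff_inv_smul_mem] at this
  simpa using this

/-- Main lemma, general version. -/
lemma aux_main {G : Type*} [Group G] [TopologicalSpace G] [IsTopologicalGroup G]
    [BaireSpace G] (H : Subgroup G) (hcount : Countable (G ⧸ H)) (V : ℕ → Set G)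
    (hVo : ∀ n, IsOpen (V n)) (hVd : ∀ n, (H : Set G) ⊆ closure (V n ∩ H))
    (x : G) (hx : x ∈ H) (O : Set G) (hO : IsOpen O) (hxO : x ∈ O) :
    ∃ y, y ∈ H ∧ y ∈ O ∧ ∀ n, y ∈ V n := by
  have hVo' : ∀ n, IsOpen (x⁻¹ • V n) := fun n => (hVo n).smul x⁻¹
  have hVd' : ∀ n, (H : Set G) ⊆ closure ((x⁻¹ • V n) ∩ H) := by
    intro n h hh
    have h1 : x * h ∈ closure (V n ∩ (H : Set G)) := hVd n (H.mul_mem hx hh)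
    have h2 : h ∈ x⁻¹ • closure (V n ∩ (H : Set G)) := by
      rw [Set.mem_smul_set_iff_inv_smul_mem]
      simpa using h1
    rw [← closure_smul] at h2
    refine closure_mono ?_ h2
    rintro _ ⟨z, ⟨hz1, hz2⟩, rfl⟩
    exact ⟨⟨z, hz1, rfl⟩, by simpa using H.mul_mem (H.inv_mem hx) hz2⟩
  have hO' : IsOpen (x⁻¹ • O) := hO.smul x⁻¹
  have h1O : (1 : G) ∈ x⁻¹ • O := by
    rw [Set.mem_smul_set_iff_inv_smul_mem]
    simpa using hxO
  obtain ⟨y, hyH, hyO, hyV⟩ := aux_main1 H hcount _ hVo' hVd' _ hO' h1O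
  refine ⟨x * y, H.mul_mem hx hyH, ?_, fun n => ?_⟩
  · rw [Set.mem_smul_set_iff_inv_smul_mem] at hyO
    simpa using hyO
  · have := hyV n
    rw [Set.mem_smul_set_iff_inv_smul_mem, smul_eq_mul] at this
    simpa using this

/-- If `H` is a subgroup of countable index in a topological group `G` that is a Baire
space, then `H` (with the subspace topology) is a Baire space. -/
theorem stmt0 {G : Type*} [Group G] [TopologicalSpace G] [IsTopologicalGroup G]
    [BaireSpace G] (H : Subgroup G) (hcount : Countable (G ⧸ H)) :
    BaireSpace H := by
  constructor
  intro f hfo hfd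
  -- translate to sets in G
  have hV : ∀ n, ∃ V : Set G, IsOpen V ∧ Subtype.val ⁻¹' V = f n := fun n =>
    isOpen_induced_iff.mp (hfo n)
  choose V hVo hVf using hV
  have hVd : ∀ n, (H : Set G) ⊆ closure (V n ∩ (H : Set G)) := by
    intro n z hz
    have : (⟨z, hz⟩ : H) ∈ closure (f n) := (hfd n).closure_eq ▸ mem_univ _
    rw [closure_subtype] at this
    have him : Subtype.val '' (f n) = V n ∩ (H : Set G) := by
      rw [← hVf n]
      ext w
      constructor
      · rintro ⟨⟨a, ha⟩, hmem, rfl⟩; exact ⟨hmem, ha⟩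
      · rintro ⟨hw1, hw2⟩; exact ⟨⟨w, hw2⟩, hw1, rfl⟩
    rwa [him] at this
  rw [dense_iff_inter_open]
  rintro U hU ⟨⟨x, hxH⟩, hxU⟩
  obtain ⟨O, hOo, hOU⟩ := isOpen_induced_iff.mp hU
  have hxO : x ∈ O := by
    have : (⟨x, hxH⟩ : H) ∈ Subtype.val ⁻¹' O := hOU ▸ hxU
    exact this
  obtain ⟨y, hyH, hyO, hyV⟩ := aux_main H hcount V hVo hVd x hxH O hOo hxO
  refine ⟨⟨y, hyH⟩, ?_, ?_⟩
  · rw [← hOU]; exact hyO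
  · rw [mem_iInter]
    intro n
    rw [← hVf n]
    exact hyV n
end

section
/- If f : G → H is a continuous surjective group homomorphism between topological groups, G is totally bounded (precompact) and a Baire space, and H is Hausdorff and totally bounded, then H is a Baire space. -/
open Pointwise

private lemma interior_union_empty {X : Type*} [TopologicalSpace X] {A B : Set X}
    (hA : IsClosed A) (hiA : interior A = ∅) (hiB : interior B = ∅) :
    interior (A ∪ B) = ∅ := by
  have h1 : interior (A ∪ B) \ A ⊆ interior B := by
    apply interior_maximal ?_ (isOpen_interior.sdiff hA)
    rintro x ⟨hx, hxA⟩
    rcases interior_subset hx with h | h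
    · exact absurd h hxA
    · exact h
  have h2 : interior (A ∪ B) ⊆ A := by
    intro x hx
    by_contra h
    have := h1 ⟨hx, h⟩
    rw [hiB] at this
    exact this
  have h3 : interior (A ∪ B) ⊆ interior A := interior_maximal h2 isOpen_interior
  rw [hiA] at h3
  exact Set.subset_empty_iff.mp h3

private lemma interior_finset_union_empty {X α : Type*} [TopologicalSpace X]
    (F : Finset α) (C : α → Set X) (hc : ∀ a, IsClosed (C a))
    (hi : ∀ a, interior (C a) = ∅) : interior (⋃ a ∈ F, C a) = ∅ := by
  classical
  induction F using Finset.induction_on with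
  | empty => simp
  | insert _ _ hx ih =>
    rw [Finset.set_biUnion_insert]
    exact interior_union_empty (hc _) (hi _) ih

/-- A continuous surjective homomorphic image of a totally bounded Baire topological group
in a Hausdorff totally bounded group is Baire. -/
theorem stmt2 {G H : Type*} [Group G] [TopologicalSpace G] [IsTopologicalGroup G]
    [Group H] [TopologicalSpace H] [IsTopologicalGroup H] [T2Space H]
    (f : G →* H) (hf : Continuous f) (hsurj : Function.Surjective f)
    (hGtb : ∀ U ∈ nhds (1 : G), ∃ F : Finset G, U * (F : Set G) = Set.univ)
    (hHtb : ∀ U ∈ nhds (1 : H), ∃ F : Finset H, U * (F : Set H) = Set.univ)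
    [BaireSpace G] : BaireSpace H := by
  -- Key claim: preimage of a dense open set is dense.
  have key : ∀ D : Set H, IsOpen D → Dense D → Dense (f ⁻¹' D) := by
    intro D hDo hDd
    rw [dense_iff_inter_open]
    rintro V hV ⟨v, hv⟩
    by_contra hcon
    rw [Set.not_nonempty_iff_eq_empty] at hcon
    -- image of V avoids D
    have himg : f '' V ⊆ Dᶜ := by
      rintro _ ⟨x, hxV, rfl⟩ hxD
      exact absurd (Set.mem_inter hxV hxD) (by rw [hcon]; exact Set.notMem_empty x)
    set C := closure (f '' V) with hC
    have hCc : IsClosed C := isClosed_closure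
    have hCi : interior C = ∅ := by
      have h1 : C ⊆ Dᶜ := closure_minimal himg hDo.isClosed_compl
      have h2 : interior (Dᶜ) = ∅ := by
        rw [interior_compl, hDd.closure_eq, Set.compl_univ]
      have := interior_mono h1
      rw [h2] at this
      exact Set.subset_empty_iff.mp this
    -- cover G by translates of V
    have hUnhds : V * ({v⁻¹} : Set G) ∈ nhds (1 : G) := by
      have hopen : IsOpen (V * ({v⁻¹} : Set G)) := hV.mul_right
      refine hopen.mem_nhds ?_
      have : v * v⁻¹ ∈ V * ({v⁻¹} : Set G) :=
        Set.mul_mem_mul hv rfl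
      rwa [mul_inv_cancel] at this
    obtain ⟨F, hF⟩ := hGtb _ hUnhds
    -- translates of C cover H
    have hcover : (Set.univ : Set H) ⊆ ⋃ g ∈ F, C * ({f (v⁻¹ * g)} : Set H) := by
      intro h _
      obtain ⟨x, rfl⟩ := hsurj h
      have hx : x ∈ (V * ({v⁻¹} : Set G)) * (F : Set G) := by rw [hF]; trivial
      obtain ⟨y, hy, g, hg, rfl⟩ := hx
      obtain ⟨w, hw, v', hv', rfl⟩ := hy
      rcases hv' with rfl
      have : f (w * v⁻¹ * g) = f w * f (v⁻¹ * g) := by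
        rw [mul_assoc, map_mul]
      rw [this]
      refine Set.mem_biUnion hg ?_
      exact Set.mul_mem_mul (subset_closure ⟨w, hw, rfl⟩) rfl
    -- each translate is closed with empty interior
    have hcl : ∀ t : H, IsClosed (C * ({t} : Set H)) := by
      intro t
      rw [Set.mul_singleton]
      exact (Homeomorph.mulRight t).isClosedMap C hCc
    have hint : ∀ t : H, interior (C * ({t} : Set H)) = ∅ := by
      intro t
      rw [Set.mul_singleton, ← Homeomorph.coe_mulRight,
        ← (Homeomorph.mulRight t).image_interior, hCi, Set.image_empty]
    have hempty : interior (⋃ g ∈ F, C * ({f (v⁻¹ * g)} : Set H)) = ∅ :=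
      interior_finset_union_empty F _ (fun g => hcl _) (fun g => hint _)
    have : (Set.univ : Set H) = ∅ := by
      have huniv : (⋃ g ∈ F, C * ({f (v⁻¹ * g)} : Set H)) = Set.univ :=
        Set.eq_univ_of_univ_subset hcover
      rw [huniv, interior_univ] at hempty
      exact hempty
    exact absurd (Set.mem_univ (1 : H)) (by rw [this]; exact Set.notMem_empty _)
  constructor
  intro s hso hsd
  have hpre : Dense (⋂ n, f ⁻¹' s n) :=
    dense_iInter_of_isOpen (fun n => (hso n).preimage hf) (fun n => key _ (hso n) (hsd n))
  have himg : Dense (f '' ⋂ n, f ⁻¹' s n) :=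
    hsurj.denseRange.dense_image hf hpre
  refine himg.mono ?_
  refine (Set.image_iInter_subset _ _).trans ?_
  exact Set.iInter_mono fun n => Set.image_preimage_subset f (s n)
end

section
/- A totally bounded Hausdorff topological group G is a Baire space if and only if G is a non-meager subset of its completion. -/
open Set

/-- Key covering lemma: if `G` is a dense subgroup of a compact group `K`, `O` is open in `K`
with `O ∩ G` nonempty and meagre (in `K`), then `G` itself is meagre in `K`. -/
lemma aux_cover {K : Type*} [Group K] [TopologicalSpace K] [IsTopologicalGroup K]
    [CompactSpace K] (G : Subgroup K) (hdense : Dense (G : Set K))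
    {O : Set K} (hO : IsOpen O) (hne : (O ∩ (G : Set K)).Nonempty)
    (hmea : IsMeagre (O ∩ (G : Set K))) : IsMeagre (G : Set K) := by
  obtain ⟨o, hoO, hoG⟩ := hne
  -- the translates g • O, g ∈ G, cover K
  have hcover : (univ : Set K) ⊆ ⋃ g : G, (fun y => (g : K)⁻¹ * y) ⁻¹' O := by
    intro x _
    have hop : IsOpen {y : K | y⁻¹ * x ∈ O} :=
      hO.preimage (by continuity)
    have hne2 : {y : K | y⁻¹ * x ∈ O}.Nonempty := ⟨x * o⁻¹, by simp [hoO]⟩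
    obtain ⟨g, hg1, hg2⟩ := hdense.inter_open_nonempty _ hop hne2
    exact mem_iUnion.2 ⟨⟨g, hg2⟩, hg1⟩
  obtain ⟨t, ht⟩ := isCompact_univ.elim_finite_subcover
    (fun g : G => (fun y => (g : K)⁻¹ * y) ⁻¹' O)
    (fun g => hO.preimage (by continuity)) hcover
  -- G ⊆ ⋃ g ∈ t, (g • (O ∩ G)), each translate meagre
  have hsub : (G : Set K) ⊆ ⋃ g ∈ t, (fun y => (g : K)⁻¹ * y) ⁻¹' (O ∩ (G : Set K)) := by
    intro x hx
    obtain ⟨g, hgt, hgx⟩ := mem_iUnion₂.1 (ht (mem_univ x))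
    refine mem_iUnion₂.2 ⟨g, hgt, hgx, ?_⟩
    exact mul_mem (inv_mem g.2) hx
  refine IsMeagre.mono hsub ?_
  rw [IsMeagre, compl_iUnion₂]
  refine (Filter.biInter_finset_mem t).2 fun g _ => ?_
  have : IsMeagre ((fun y => (g : K)⁻¹ * y) ⁻¹' (O ∩ (G : Set K))) :=
    hmea.preimage_of_isOpenMap (by continuity) (Homeomorph.mulLeft ((g : K)⁻¹)).isOpenMap
  exact this

/-- A totally bounded Hausdorff topological group `G` (realized as a dense subgroup of a
compact Hausdorff group `K`, its Raĭkov completion) is a Baire space iff `G` is a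
non-meager subset of `K`. -/
theorem stmt3 {K : Type*} [Group K] [TopologicalSpace K] [IsTopologicalGroup K]
    [CompactSpace K] [T2Space K] (G : Subgroup K) (hdense : Dense (G : Set K)) :
    BaireSpace G ↔ ¬ IsMeagre (G : Set K) := by
  constructor
  · -- Baire → non-meagre
    intro hB hmea
    rw [isMeagre_iff_countable_union_isNowhereDense] at hmea
    obtain ⟨S, hND, hSc, hGS⟩ := hmea
    have hSne : S.Nonempty := by
      rcases hGS (G.one_mem) with ⟨s, hsS, -⟩
      exact ⟨s, hsS⟩
    obtain ⟨f, rfl⟩ := hSc.exists_eq_range hSne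
    -- the sets Uₙ = G \ closure (f n) are open dense in G
    set U : ℕ → Set G := fun n => (Subtype.val) ⁻¹' (closure (f n))ᶜ with hU
    have hUopen : ∀ n, IsOpen (U n) := fun n =>
      (isClosed_closure).isOpen_compl.preimage continuous_subtype_val
    have hUdense : ∀ n, Dense (U n) := by
      intro n
      rw [dense_iff_inter_open]
      intro W hW hWne
      by_contra hempty
      push_neg at hempty
      have hWsub : W ⊆ Subtype.val ⁻¹' (closure (f n)) := by
        intro x hx
        by_contra hxn
        exact absurd hempty (Nonempty.ne_empty ⟨x, hx, hxn⟩)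
      obtain ⟨V, hVopen, hVeq⟩ := isOpen_induced_iff.1 hW
      -- V ∩ G ⊆ closure (f n), V ∩ G nonempty; density of G gives V ⊆ closure (f n)
      have hVsub : V ⊆ closure (f n) := by
        have h1 : V ∩ (G : Set K) ⊆ closure (f n) := by
          rintro x ⟨hxV, hxG⟩
          have : (⟨x, hxG⟩ : G) ∈ W := by rw [← hVeq]; exact hxV
          exact hWsub this
        calc V ⊆ closure (V ∩ (G : Set K)) := hdense.open_subset_closure_inter hVopen
          _ ⊆ closure (closure (f n)) := closure_mono h1
          _ = closure (f n) := closure_closure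
      obtain ⟨x, hxW⟩ := hWne
      have hxV : (x : K) ∈ V := by rw [← hVeq] at hxW; exact hxW
      have : (x : K) ∈ interior (closure (f n)) :=
        interior_maximal hVsub hVopen hxV
      rw [hND _ (mem_range_self n)] at this
      exact this
    have hDense : Dense (⋂ n, U n) := BaireSpace.baire_property U hUopen hUdense
    have : (⋂ n, U n).Nonempty := hDense.nonempty
    obtain ⟨x, hx⟩ := this
    obtain ⟨s, ⟨n, rfl⟩, hxs⟩ := hGS x.2
    exact (mem_iInter.1 hx n) (subset_closure hxs)
  · -- non-meagre → Baire
    intro hnm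
    constructor
    intro f hfopen hfdense
    -- realize each f n as preimage of an open V n ⊆ K
    choose V hVopen hVeq using fun n => isOpen_induced_iff.1 (hfopen n)
    have hVdense : ∀ n, Dense (V n) := by
      intro n
      rw [dense_iff_inter_open]
      intro O hO hOne
      obtain ⟨x, hxO, hxG⟩ := hdense.inter_open_nonempty O hO hOne
      have hpre : IsOpen ((Subtype.val : G → K) ⁻¹' O) := hO.preimage continuous_subtype_val
      obtain ⟨y, hyO, hyf⟩ := (hfdense n).inter_open_nonempty _ hpre ⟨⟨x, hxG⟩, hxO⟩
      have : (y : K) ∈ V n := by rw [← hVeq n] at hyf; exact hyf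
      exact ⟨y, hyO, this⟩
    -- T = ⋂ V n is residual in the Baire space K
    have hT : (⋂ n, V n) ∈ residual K :=
      countable_iInter_mem.2 fun n => residual_of_dense_open (hVopen n) (hVdense n)
    have hTc : IsMeagre (⋂ n, V n)ᶜ := by rwa [IsMeagre, compl_compl]
    rw [dense_iff_inter_open]
    intro W hW hWne
    obtain ⟨O, hO, hOeq⟩ := isOpen_induced_iff.1 hW
    have hOGne : (O ∩ (G : Set K)).Nonempty := by
      obtain ⟨x, hxW⟩ := hWne
      have : (x : K) ∈ O := by rw [← hOeq] at hxW; exact hxW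
      exact ⟨x, this, x.2⟩
    have key : (O ∩ (G : Set K) ∩ ⋂ n, V n).Nonempty := by
      by_contra hempty
      push_neg at hempty
      have hsub : O ∩ (G : Set K) ⊆ (⋂ n, V n)ᶜ := by
        intro x hx hxT
        exact absurd hempty (Nonempty.ne_empty ⟨x, hx, hxT⟩)
      exact hnm (aux_cover G hdense hO hOGne (hTc.mono hsub))
    obtain ⟨x, ⟨hxO, hxG⟩, hxT⟩ := key
    refine ⟨⟨x, hxG⟩, ?_, ?_⟩
    · rw [← hOeq]; exact hxO
    · rw [mem_iInter]
      intro n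
      rw [← hVeq n]
      exact mem_iInter.1 hxT n
end

section
/- If G is a dense non-meager subgroup of a compact Hausdorff group K, then G is a Baire space. -/
open Set Topology

lemma aux_nd_image {X Y : Type*} [TopologicalSpace X] [TopologicalSpace Y]
    (e : X ≃ₜ Y) {s : Set X} (h : IsNowhereDense s) : IsNowhereDense (e '' s) := by
  rw [IsNowhereDense, ← e.image_closure, ← e.image_interior, h, Set.image_empty]

lemma aux_nd_meagre {X : Type*} [TopologicalSpace X] {s : Set X}
    (h : IsNowhereDense s) : IsMeagre s := by
  rw [isMeagre_iff_countable_union_isNowhereDense]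
  exact ⟨{s}, by simpa using h, Set.countable_singleton s, by simp⟩

lemma aux_meagre_image {X Y : Type*} [TopologicalSpace X] [TopologicalSpace Y]
    (e : X ≃ₜ Y) {s : Set X} (h : IsMeagre s) : IsMeagre (e '' s) := by
  rw [isMeagre_iff_countable_union_isNowhereDense] at h ⊢
  obtain ⟨S, hS, hc, hsub⟩ := h
  refine ⟨(fun u => e '' u) '' S, ?_, hc.image _, ?_⟩
  · rintro t ⟨u, hu, rfl⟩; exact aux_nd_image e (hS u hu)
  · rintro x ⟨y, hy, rfl⟩
    obtain ⟨u, hu, hyu⟩ := hsub hy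
    exact ⟨e '' u, ⟨u, hu, rfl⟩, ⟨y, hyu, rfl⟩⟩

/-- Key lemma: a nonempty relatively open subset of a dense non-meagre subgroup
of a compact group is non-meagre in the ambient group. -/
lemma aux_key {K : Type*} [Group K] [TopologicalSpace K] [IsTopologicalGroup K]
    [CompactSpace K] (G : Subgroup K) (hdense : Dense (G : Set K))
    (hnm : ¬ IsMeagre (G : Set K)) {V : Set K} (hV : IsOpen V)
    (hne : (V ∩ (G : Set K)).Nonempty) : ¬ IsMeagre (V ∩ (G : Set K)) := by
  intro hm
  obtain ⟨u, huV, huG⟩ := hne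
  -- cover K by translates (g * u⁻¹) • V with g ∈ G
  have hcover : (Set.univ : Set K) ⊆ ⋃ g : G, (fun x => (g : K) * u⁻¹ * x) '' V := by
    intro k _
    -- the set of candidate g's is open and nonempty, so meets G by density
    have hWopen : IsOpen {y : K | u * y⁻¹ * k ∈ V} := by
      have : Continuous fun y : K => u * y⁻¹ * k := by continuity
      exact hV.preimage this
    have hWne : ({y : K | u * y⁻¹ * k ∈ V}).Nonempty := ⟨k, by simpa using huV⟩
    obtain ⟨g, hgW, hgG⟩ := hdense.inter_open_nonempty _ hWopen hWne
    refine Set.mem_iUnion.2 ⟨⟨g, hgG⟩, ⟨u * g⁻¹ * k, hgW, by group⟩⟩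
  obtain ⟨t, ht⟩ := isCompact_univ.elim_finite_subcover
    (fun g : G => (fun x => (g : K) * u⁻¹ * x) '' V)
    (fun g => (Homeomorph.mulLeft ((g : K) * u⁻¹)).isOpenMap V hV) hcover
  -- G is contained in the finite union of translates of V ∩ G
  have hsub : (G : Set K) ⊆ ⋃ g ∈ t, (fun x => (g : K) * u⁻¹ * x) '' (V ∩ (G : Set K)) := by
    intro x hxG
    have hxm := Set.mem_iUnion₂.1 (ht (Set.mem_univ x))
    obtain ⟨g, hgt, v, hvV, hvx⟩ := hxm
    refine Set.mem_iUnion₂.2 ⟨g, hgt, v, ⟨hvV, ?_⟩, hvx⟩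
    have : v = u * (g : K)⁻¹ * x := by rw [← hvx]; group
    rw [this]
    exact mul_mem (mul_mem huG (inv_mem g.2)) hxG
  apply hnm
  refine IsMeagre.mono hsub ?_
  rw [IsMeagre, Set.compl_iUnion₂]
  refine (Filter.biInter_finset_mem _).2 fun g _ => ?_
  have := aux_meagre_image (Homeomorph.mulLeft ((g : K) * u⁻¹)) hm
  exact this

/-- A dense non-meager subgroup of a compact Hausdorff group is a Baire space. -/
theorem stmt4 {K : Type*} [Group K] [TopologicalSpace K] [IsTopologicalGroup K]
    [CompactSpace K] [T2Space K] (G : Subgroup K) (hdense : Dense (G : Set K))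
    (hnm : ¬ IsMeagre (G : Set K)) :
    BaireSpace G := by
  constructor
  intro f hopen hdns
  -- realize each f n as the preimage of an open set U n of K
  choose U hUopen hUpre using fun n => isOpen_induced_iff.1 (hopen n)
  -- each U n ∩ G is dense in K
  have hUdense : ∀ n, Dense (U n ∩ (G : Set K)) := by
    intro n
    have h1 : (G : Set K) ⊆ closure (U n ∩ (G : Set K)) := by
      rintro x hxG
      have := (hdns n).closure_eq ▸ Set.mem_univ (⟨x, hxG⟩ : G)
      have hx : (⟨x, hxG⟩ : G) ∈ closure (f n) := by
        rw [(hdns n).closure_eq]; trivial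
      rw [closure_subtype] at hx
      have himg : (Subtype.val '' (f n) : Set K) = U n ∩ (G : Set K) := by
        rw [← hUpre n, Set.image_preimage_eq_inter_range, Subtype.range_coe]
      rwa [himg] at hx
    exact dense_closure.mp (hdense.mono h1)
  rw [dense_iff_inter_open]
  rintro W hW ⟨p, hpW⟩
  obtain ⟨W', hW'open, hW'pre⟩ := isOpen_induced_iff.1 hW
  by_contra hempty
  push_neg at hempty
  -- then W' ∩ G is covered by the nowhere dense sets W' ∩ G \ U n
  have hcov : W' ∩ (G : Set K) ⊆ ⋃ n, (W' ∩ (G : Set K)) \ U n := by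
    rintro x ⟨hxW, hxG⟩
    have hxnot : ∃ n, x ∉ U n := by
      by_contra hall
      push_neg at hall
      have : (⟨x, hxG⟩ : G) ∈ W ∩ ⋂ n, f n := by
        refine ⟨by rw [← hW'pre]; exact hxW, Set.mem_iInter.2 fun n => ?_⟩
        rw [← hUpre n]; exact hall n
      rw [hempty] at this
      exact this
    obtain ⟨n, hn⟩ := hxnot
    exact Set.mem_iUnion.2 ⟨n, ⟨hxW, hxG⟩, hn⟩
  -- each such set is nowhere dense
  have hnd : ∀ n, IsNowhereDense ((W' ∩ (G : Set K)) \ U n) := by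
    intro n
    rw [IsNowhereDense, Set.eq_empty_iff_forall_notMem]
    intro x hx
    set s := (W' ∩ (G : Set K)) \ U n with hs
    have hO : IsOpen (interior (closure s)) := isOpen_interior
    have hxW' : (interior (closure s) ∩ W').Nonempty := by
      have hxcl : x ∈ closure W' := closure_mono (fun y hy => hy.1.1) (interior_subset hx)
      exact mem_closure_iff.1 hxcl _ hO hx
    obtain ⟨y, hyO, hyW'⟩ := hxW'
    -- the open set (interior (closure s)) ∩ W' meets the dense set U n ∩ G
    have hz := (hUdense n).inter_open_nonempty (W' ∩ interior (closure s))
      (hW'open.inter hO) ⟨y, hyW', hyO⟩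
    obtain ⟨z, ⟨hzW', hzO⟩, hzU, hzG⟩ := hz
    -- z ∈ closure s, and U n ∩ W' ∩ interior(closure s) is an open nbhd of z
    have hzcl : z ∈ closure s := interior_subset hzO
    obtain ⟨w, hw1, hw2⟩ := mem_closure_iff.1 hzcl (U n ∩ W')
      ((hUopen n).inter hW'open) ⟨hzU, hzW'⟩
    exact hw2.2 hw1.1
  -- hence W' ∩ G is meagre, contradicting the key lemma
  have hmeagre : IsMeagre (W' ∩ (G : Set K)) :=
    IsMeagre.mono hcov (isMeagre_iUnion fun n => aux_nd_meagre (hnd n))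
  have hWne : (W' ∩ (G : Set K)).Nonempty := ⟨p, by rw [← hW'pre] at hpW; exact hpW, p.2⟩
  exact aux_key G hdense hnm hW'open hWne hmeagre
end

section
/- Every dense subgroup of a compact Hausdorff topological group has countable cellularity, i.e., every family of pairwise disjoint nonempty open subsets is countable. -/
open MeasureTheory

/-- Every dense subgroup of a compact Hausdorff topological group has countable
cellularity: every pairwise disjoint family of nonempty open subsets is countable. -/
theorem stmt6 {K : Type*} [Group K] [TopologicalSpace K] [IsTopologicalGroup K]
    [CompactSpace K] [T2Space K] (G : Subgroup K) (hdense : Dense (G : Set K))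
    (𝒰 : Set (Set G)) (hopen : ∀ U ∈ 𝒰, IsOpen U ∧ U.Nonempty)
    (hdisj : 𝒰.PairwiseDisjoint id) :
    𝒰.Countable := by
  -- choose open sets in K inducing each member of 𝒰
  have hch : ∀ U : 𝒰, ∃ V : Set K, IsOpen V ∧ Subtype.val ⁻¹' V = (U : Set G) := by
    rintro ⟨U, hU⟩
    have := (hopen U hU).1
    rwa [isOpen_induced_iff] at this
  choose V hVopen hVpre using hch
  -- the V's are pairwise disjoint (using density of G)
  have hVdisj : Pairwise (Function.onFun Disjoint V) := by
    intro U W hUW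
    have hne : (U : Set G) ≠ (W : Set G) := by
      intro h
      exact hUW (Subtype.ext h)
    have hUWdisj : Disjoint (U : Set G) (W : Set G) := hdisj U.2 W.2 hne
    have hopenUW : IsOpen (V U ∩ V W) := (hVopen U).inter (hVopen W)
    have hempty : V U ∩ V W = ∅ := by
      by_contra hne'
      obtain ⟨x, hx⟩ := hdense.inter_open_nonempty _ hopenUW
        (Set.nonempty_iff_ne_empty.2 hne')
      have hxG : x ∈ G := hx.2
      have : (⟨x, hxG⟩ : G) ∈ (U : Set G) ∩ (W : Set G) := by
        constructor
        · rw [← hVpre U]; exact hx.1.1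
        · rw [← hVpre W]; exact hx.1.2
      exact hUWdisj.ne_of_mem this.1 this.2 rfl
    exact Set.disjoint_iff_inter_eq_empty.2 hempty
  -- each V is nonempty
  have hVne : ∀ U : 𝒰, (V U).Nonempty := fun U => by
    obtain ⟨x, hx⟩ := (hopen U U.2).2
    rw [← hVpre U] at hx
    exact ⟨x, hx⟩
  -- Haar measure
  borelize K
  let μ : Measure K := Measure.haar
  have hpos : ∀ U : 𝒰, 0 < μ (V U) := fun U =>
    (hVopen U).measure_pos μ (hVne U)
  have := Measure.countable_meas_pos_of_disjoint_iUnion (μ := μ)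
    (fun U : 𝒰 => (hVopen U).measurableSet) hVdisj
  have huniv : {U : 𝒰 | 0 < μ (V U)} = Set.univ := by
    ext U; simp [hpos U]
  rw [huniv] at this
  have : Countable 𝒰 := Set.countable_univ_iff.mp this
  exact Set.countable_coe_iff.mp this
end

section
/- Let {hₙ : n ∈ ℕ} be continuous homomorphisms from a topological group G to a topological group H. If the set of x ∈ G for which (hₙ(x)) is a Cauchy sequence in H is non-meager in G, then the family {hₙ} is equicontinuous at the identity. -/
/-- If `hₙ : G → H` are continuous homomorphisms of topological groups and the set of
`x ∈ G` such that `(hₙ x)` is a Cauchy sequence in `H` is non-meager in `G`, then the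
family `{hₙ}` is equicontinuous at the identity. -/
theorem stmt8 {G H : Type*} [Group G] [TopologicalSpace G] [IsTopologicalGroup G]
    [Group H] [TopologicalSpace H] [IsTopologicalGroup H]
    (h : ℕ → G →* H) (hcont : ∀ n, Continuous (h n))
    (hnm : ¬ IsMeagre {x : G | ∀ V ∈ nhds (1 : H),
      ∃ N, ∀ m ≥ N, ∀ n ≥ N, h m x * (h n x)⁻¹ ∈ V}) :
    ∀ V ∈ nhds (1 : H), ∃ U ∈ nhds (1 : G), ∀ n, ∀ x ∈ U, h n x ∈ V := by
  intro V hV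
  -- find a closed neighborhood K of 1 with K*K*K ⊆ V
  obtain ⟨V₁, V₁open, hV₁, hV₁V⟩ := exists_open_nhds_one_mul_subset hV
  obtain ⟨K, hK, Kclosed, -, hKK⟩ := exists_closed_nhds_one_inv_eq_mul_subset (V₁open.mem_nhds hV₁)
  have hK1 : (1 : H) ∈ K := mem_of_mem_nhds hK
  have hKV₁ : K ⊆ V₁ := fun k hk => hKK ⟨k, hk, 1, hK1, mul_one k⟩
  have hKKK : ∀ a b c : H, a ∈ K → b ∈ K → c ∈ K → a * b * c ∈ V := by
    intro a b c ha hb hc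
    exact hV₁V ⟨a * b, hKK ⟨a, ha, b, hb, rfl⟩, c, hKV₁ hc, rfl⟩
  -- the sets E N
  set E : ℕ → Set G := fun N => {x | ∀ m ≥ N, ∀ n ≥ N, h m x * (h n x)⁻¹ ∈ K} with hE
  have Eclosed : ∀ N, IsClosed (E N) := by
    intro N
    have : E N = ⋂ m, ⋂ (_ : m ≥ N), ⋂ n, ⋂ (_ : n ≥ N),
        (fun x => h m x * (h n x)⁻¹) ⁻¹' K := by
      ext x; simp [hE, Set.mem_iInter]
    rw [this]
    exact isClosed_iInter fun m => isClosed_iInter fun _ => isClosed_iInter fun n =>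
      isClosed_iInter fun _ => Kclosed.preimage (((hcont m).mul ((hcont n).inv)))
  -- some E N is non-meagre
  have hsub : {x : G | ∀ V ∈ nhds (1 : H),
      ∃ N, ∀ m ≥ N, ∀ n ≥ N, h m x * (h n x)⁻¹ ∈ V} ⊆ ⋃ N, E N := by
    intro x hx
    obtain ⟨N, hN⟩ := hx K hK
    exact Set.mem_iUnion.2 ⟨N, hN⟩
  have : ¬ IsMeagre (⋃ N, E N) := fun hm => hnm (hm.mono hsub)
  have hexN : ∃ N, ¬ IsMeagre (E N) := by
    by_contra hall
    push_neg at hall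
    exact this (isMeagre_iUnion hall)
  obtain ⟨N, hN⟩ := hexN
  -- it has an interior point x₀
  have hint : (interior (E N)).Nonempty := by
    rcases Set.eq_empty_or_nonempty (interior (E N)) with he | hne
    · exfalso
      apply hN
      rw [isMeagre_iff_countable_union_isNowhereDense]
      exact ⟨{E N}, by simpa using ((Eclosed N).isNowhereDense_iff).2 he,
        Set.countable_singleton _, by simp⟩
    · exact hne
  obtain ⟨x₀, hx₀⟩ := hint
  have hx₀E : x₀ ∈ E N := interior_subset hx₀
  -- translate: {u | u * x₀ ∈ E N} is a neighborhood of 1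
  have hU₂ : (fun u : G => u * x₀) ⁻¹' (interior (E N)) ∈ nhds (1 : G) := by
    have : ContinuousAt (fun u : G => u * x₀) 1 := (continuous_mul_right x₀).continuousAt
    apply this
    simpa using isOpen_interior.mem_nhds hx₀
  -- continuity of h 0, ..., h N at 1
  have hU₃ : (⋂ k ∈ Finset.range (N + 1), (h k) ⁻¹' K) ∈ nhds (1 : G) := by
    refine (Filter.biInter_finset_mem _).2 fun k _ => ?_
    have : ContinuousAt (h k) 1 := (hcont k).continuousAt
    apply this
    simpa using hK
  refine ⟨_ ∩ _, Filter.inter_mem hU₂ hU₃, ?_⟩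
  rintro n u ⟨hu₂, hu₃⟩
  have hukK : ∀ k ≤ N, h k u ∈ K := by
    intro k hk
    have := Set.mem_iInter₂.1 hu₃ k (Finset.mem_range.2 (Nat.lt_succ_of_le hk))
    exact this
  rcases le_or_gt n N with hn | hn
  · have : h n u = 1 * h n u * 1 := by group
    rw [this]
    exact hKKK _ _ _ hK1 (hukK n hn) hK1
  · have hux₀ : u * x₀ ∈ E N := interior_subset hu₂
    have hnN : n ≥ N := hn.le
    have w₁ : h n (u * x₀) * (h N (u * x₀))⁻¹ ∈ K := hux₀ n hnN N le_rfl
    have w₂ : h N x₀ * (h n x₀)⁻¹ ∈ K := hx₀E N le_rfl n hnN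
    have key : h n u = (h n (u * x₀) * (h N (u * x₀))⁻¹) * h N u * (h N x₀ * (h n x₀)⁻¹) := by
      simp only [map_mul]
      group
    rw [key]
    exact hKKK _ _ _ w₁ (hukK N le_rfl) w₂
end

section
/- Every Baire topological group with a countable network is separable and metrizable (indeed second countable). -/
open Filter Set TopologicalSpace Topology Pointwise

/-- π-base step: in a Baire space with network 𝒩, every nonempty open set contains a
network element whose closure has nonempty interior. -/
theorem pibase {G : Type*} [TopologicalSpace G] [BaireSpace G]
    (𝒩 : Set (Set G)) (hcount : 𝒩.Countable)
    (hnet : ∀ (x : G) (U : Set G), IsOpen U → x ∈ U → ∃ N ∈ 𝒩, x ∈ N ∧ N ⊆ U)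
    {V : Set G} (hV : IsOpen V) (hne : V.Nonempty) :
    ∃ N ∈ 𝒩, N ⊆ V ∧ (interior (closure N)).Nonempty := by
  set S : Set (Set G) := insert Vᶜ ((fun N => closure N) '' {N ∈ 𝒩 | N ⊆ V}) with hS
  have hSc : S.Countable := (((hcount.mono (sep_subset _ _)).image _).insert _)
  have hScl : ∀ s ∈ S, IsClosed s := by
    rintro s (rfl | ⟨N, -, rfl⟩)
    · exact hV.isClosed_compl
    · exact isClosed_closure
  have hcover : ⋃₀ S = univ := by
    apply eq_univ_of_forall
    intro x
    by_cases hx : x ∈ V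
    · obtain ⟨N, hN𝒩, hxN, hNV⟩ := hnet x V hV hx
      exact ⟨closure N, Or.inr ⟨N, ⟨hN𝒩, hNV⟩, rfl⟩, subset_closure hxN⟩
    · exact ⟨Vᶜ, Or.inl rfl, hx⟩
  have hdense := dense_sUnion_interior_of_closed hScl hSc hcover
  obtain ⟨x, hxV, hxU⟩ := hdense.inter_open_nonempty V hV hne
  simp only [mem_iUnion] at hxU
  obtain ⟨s, hsS, hxs⟩ := hxU
  rcases hsS with rfl | ⟨N, ⟨hN𝒩, hNV⟩, rfl⟩
  · exact absurd (interior_subset hxs) (fun h => h hxV)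
  · exact ⟨N, hN𝒩, hNV, ⟨x, hxs⟩⟩

theorem nhds_one_cg {G : Type*} [Group G] [TopologicalSpace G] [IsTopologicalGroup G] [T2Space G]
    [BaireSpace G] (𝒩 : Set (Set G)) (hcount : 𝒩.Countable)
    (hnet : ∀ (x : G) (U : Set G), IsOpen U → x ∈ U → ∃ N ∈ 𝒩, x ∈ N ∧ N ⊆ U) :
    (𝓝 (1 : G)).IsCountablyGenerated := by
  set P : Set (Set G) := {N ∈ 𝒩 | (interior (closure N)).Nonempty} with hP
  have hPc : P.Countable := hcount.mono (sep_subset _ _)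
  have hbasis : (𝓝 (1 : G)).HasBasis (fun N => N ∈ P)
      (fun N => (interior (closure N))⁻¹ * interior (closure N)) := by
    constructor
    intro U
    constructor
    · intro hU
      -- find symmetric open W with W⁻¹ * W ⊆ U
      obtain ⟨W₀, hW₀o, hW₀1, hW₀⟩ := exists_open_nhds_one_mul_subset hU
      set W := W₀ ∩ W₀⁻¹ with hW
      have hWo : IsOpen W := hW₀o.inter (hW₀o.preimage continuous_inv)
      have hW1 : (1 : G) ∈ W := ⟨hW₀1, by simpa using hW₀1⟩
      have hWU : W⁻¹ * W ⊆ U := by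
        rintro _ ⟨a, ha, b, hb, rfl⟩
        exact hW₀ (mul_mem_mul (by simpa using ha.2) hb.1)
      obtain ⟨C, hCmem, hCcl, hCW⟩ := exists_mem_nhds_isClosed_subset (hWo.mem_nhds hW1)
      set V := interior C with hV
      have hVo : IsOpen V := isOpen_interior
      have hV1 : (1 : G) ∈ V := mem_interior_iff_mem_nhds.2 hCmem
      obtain ⟨N, hN𝒩, hNV, hNint⟩ := pibase 𝒩 hcount hnet hVo ⟨1, hV1⟩
      refine ⟨N, ⟨hN𝒩, hNint⟩, ?_⟩
      have hsub : interior (closure N) ⊆ W := by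
        refine subset_trans interior_subset ?_
        calc closure N ⊆ closure V := closure_mono hNV
        _ ⊆ C := by simpa [hCcl.closure_eq] using closure_mono (interior_subset (s := C))
        _ ⊆ W := hCW
      exact subset_trans (mul_subset_mul (inv_subset_inv.2 hsub) hsub) hWU
    · rintro ⟨N, ⟨hN𝒩, w, hw⟩, hsub⟩
      refine Filter.mem_of_superset ?_ hsub
      have : w⁻¹ • interior (closure N) ∈ 𝓝 (1 : G) := by
        refine (isOpen_interior.smul _).mem_nhds ?_
        exact ⟨w, hw, by simp⟩
      refine Filter.mem_of_superset this ?_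
      rintro _ ⟨y, hy, rfl⟩
      exact ⟨w⁻¹, Set.inv_mem_inv.2 hw, y, hy, rfl⟩
  haveI := hPc.to_subtype
  have hbasis' : (𝓝 (1 : G)).HasBasis (fun _ : ↥P => True)
      (fun N => (interior (closure N.1))⁻¹ * interior (closure N.1)) := by
    rw [Filter.hasBasis_iff] at hbasis ⊢
    intro t
    rw [hbasis t]
    constructor
    · rintro ⟨N, hN, h⟩; exact ⟨⟨N, hN⟩, trivial, h⟩
    · rintro ⟨⟨N, hN⟩, -, h⟩; exact ⟨N, hN, h⟩
  exact hbasis'.isCountablyGenerated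

/-- Every Baire topological group with a countable network is separable and metrizable,
indeed second countable. -/
theorem stmt9 {G : Type*} [Group G] [TopologicalSpace G] [IsTopologicalGroup G] [T2Space G]
    [BaireSpace G] (𝒩 : Set (Set G)) (hcount : 𝒩.Countable)
    (hnet : ∀ (x : G) (U : Set G), IsOpen U → x ∈ U → ∃ N ∈ 𝒩, x ∈ N ∧ N ⊆ U) :
    TopologicalSpace.SeparableSpace G ∧ TopologicalSpace.MetrizableSpace G ∧
      SecondCountableTopology G := by
  classical
  -- Separability
  have hsep : TopologicalSpace.SeparableSpace G := by
    refine ⟨⟨(fun N : Set G => if h : N.Nonempty then h.some else 1) '' 𝒩,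
      hcount.image _, ?_⟩⟩
    rw [dense_iff_inter_open]
    intro U hU ⟨x, hx⟩
    obtain ⟨N, hN𝒩, hxN, hNU⟩ := hnet x U hU hx
    have hNne : N.Nonempty := ⟨x, hxN⟩
    refine ⟨if h : N.Nonempty then h.some else 1, ?_, ⟨N, hN𝒩, rfl⟩⟩
    rw [dif_pos hNne]
    exact hNU hNne.some_mem
  haveI := hsep
  haveI : (𝓝 (1 : G)).IsCountablyGenerated := nhds_one_cg 𝒩 hcount hnet
  letI : UniformSpace G := IsTopologicalGroup.rightUniformSpace G
  haveI : (uniformity G).IsCountablyGenerated := by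
    rw [uniformity_eq_comap_nhds_one']
    exact Filter.comap.isCountablyGenerated _ _
  haveI hmet : TopologicalSpace.MetrizableSpace G := UniformSpace.metrizableSpace
  haveI : SecondCountableTopology G := UniformSpace.secondCountable_of_separable G
  exact ⟨hsep, hmet, inferInstance⟩
end

section
/- If a topological group G is a Baire space and has a countable network of closed sets, then G is first countable. -/
open Filter Set Topology

/-- If a topological group `G` is a Baire space and has a countable network consisting of
closed sets, then `G` is first countable. -/
theorem stmt10 {G : Type*} [Group G] [TopologicalSpace G] [IsTopologicalGroup G] [T2Space G]
    [BaireSpace G] (𝒩 : Set (Set G)) (hcount : 𝒩.Countable)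
    (hclosed : ∀ N ∈ 𝒩, IsClosed N)
    (hnet : ∀ (x : G) (U : Set G), IsOpen U → x ∈ U → ∃ N ∈ 𝒩, x ∈ N ∧ N ⊆ U) :
    FirstCountableTopology G := by
  -- The complement of all frontiers is residual, hence dense, hence nonempty
  have hres : (⋂ N ∈ 𝒩, (frontier N)ᶜ) ∈ residual G := by
    refine (countable_bInter_mem hcount).mpr fun N hN => ?_
    exact residual_of_dense_open isClosed_frontier.isOpen_compl
      (interior_eq_empty_iff_dense_compl.mp (interior_frontier (hclosed N hN)))
  obtain ⟨x, hx⟩ := (dense_of_mem_residual hres).nonempty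
  simp only [Set.mem_iInter, Set.mem_compl_iff] at hx
  -- x lies in the interior of every network member containing it
  have hxint : ∀ N ∈ 𝒩, x ∈ N → x ∈ interior N := by
    intro N hN hxN
    by_contra h
    have hfr := hx N hN
    rw [(hclosed N hN).frontier_eq] at hfr
    exact hfr ⟨hxN, h⟩
  -- Hence 𝓝 x has a countable basis
  haveI : Countable ↥𝒩 := hcount.to_subtype
  have hb : (𝓝 x).HasBasis (fun N : ↥𝒩 => x ∈ (N : Set G))
      (fun N => interior (N : Set G)) := by
    constructor
    intro t
    constructor
    · intro ht
      obtain ⟨U, hUt, hUo, hxU⟩ := mem_nhds_iff.mp ht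
      obtain ⟨N, hN, hxN, hNU⟩ := hnet x U hUo hxU
      exact ⟨⟨N, hN⟩, hxN, (interior_subset.trans hNU).trans hUt⟩
    · rintro ⟨N, hxN, hsub⟩
      exact mem_of_superset (isOpen_interior.mem_nhds
        (hxint N N.2 hxN)) hsub
  haveI : (𝓝 x).IsCountablyGenerated := hb.isCountablyGenerated
  -- Transfer to every point by translation
  refine ⟨fun y => ?_⟩
  have : 𝓝 y = Filter.map (fun g => y * x⁻¹ * g) (𝓝 x) := by
    have h := (Homeomorph.mulLeft (y * x⁻¹)).map_nhds_eq x
    simp only [Homeomorph.coe_mulLeft, inv_mul_cancel_right] at h; exact h.symm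
  rw [this]
  infer_instance
end

section
/- Let K be a closed pseudocompact normal subgroup of a totally bounded Hausdorff topological group G. If the quotient group G/K is a Baire space, then G is a Baire space. -/
open Pointwise Set Filter Topology Uniformity

section Bump

variable {H : Type*} [Group H] [TopologicalSpace H] [IsTopologicalGroup H]

/-- In a topological group, given an open set `P` containing `x`, there is a continuous
real bump function equal to `1` at `x`, vanishing outside `P`, with values in `[0,1]`. -/
theorem exists_bump_topGroup (P : Set H) (hP : IsOpen P) (x : H) (hx : x ∈ P) :
    ∃ f : H → ℝ, Continuous f ∧ f x = 1 ∧ (∀ y, y ∉ P → f y = 0) ∧ ∀ y, 0 ≤ f y ∧ f y ≤ 1 := by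
  classical
  -- a chain of symmetric open neighborhoods of 1
  have shrink : ∀ W : {W : Set H // IsOpen W ∧ (1 : H) ∈ W ∧ W⁻¹ = W},
      ∃ W' : {W : Set H // IsOpen W ∧ (1 : H) ∈ W ∧ W⁻¹ = W}, W'.1 * W'.1 ⊆ W.1 := by
    rintro ⟨W, hWo, hW1, -⟩
    rcases exists_open_nhds_one_mul_subset (hWo.mem_nhds hW1) with ⟨V, hVo, hV1, hVV⟩
    refine ⟨⟨V ∩ V⁻¹, hVo.inter hVo.inv, ⟨hV1, by simpa using hV1⟩, by
      simp [Set.inter_inv, Set.inter_comm]⟩, ?_⟩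
    exact (Set.mul_subset_mul Set.inter_subset_left Set.inter_subset_left).trans hVV
  -- initial neighborhood
  have hU0 : IsOpen {g : H | x * g ∈ P} := hP.preimage (continuous_mul_left x)
  have hU0m : (1 : H) ∈ {g : H | x * g ∈ P} := by simpa using hx
  obtain ⟨W0, hW0sub⟩ : ∃ W : {W : Set H // IsOpen W ∧ (1 : H) ∈ W ∧ W⁻¹ = W},
      W.1 ⊆ {g : H | x * g ∈ P} := by
    rcases exists_open_nhds_one_mul_subset (hU0.mem_nhds hU0m) with ⟨V, hVo, hV1, hVV⟩
    refine ⟨⟨V ∩ V⁻¹, hVo.inter hVo.inv, ⟨hV1, by simpa using hV1⟩, by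
      simp [Set.inter_inv, Set.inter_comm]⟩, ?_⟩
    intro g hg
    simpa using hVV (Set.mul_mem_mul hg.1 hV1)
  choose next hnext using shrink
  set Wseq : ℕ → {W : Set H // IsOpen W ∧ (1 : H) ∈ W ∧ W⁻¹ = W} := fun n => next^[n] W0
    with hWseq
  have hWsucc : ∀ n, Wseq (n + 1) = next (Wseq n) := fun n =>
    Function.iterate_succ_apply' next n W0
  set V : ℕ → Set H := fun n => (Wseq n).1 with hV
  have hVo : ∀ n, IsOpen (V n) := fun n => (Wseq n).2.1
  have hV1 : ∀ n, (1 : H) ∈ V n := fun n => (Wseq n).2.2.1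
  have hVsymm : ∀ n, (V n)⁻¹ = V n := fun n => (Wseq n).2.2.2
  have hVmul : ∀ n, V (n + 1) * V (n + 1) ⊆ V n := by
    intro n
    have h := hnext (Wseq n)
    rw [← hWsucc n] at h
    exact h
  have hVdec : ∀ n, V (n + 1) ⊆ V n := fun n g hg => by
    simpa using hVmul n (Set.mul_mem_mul hg (hV1 (n + 1)))
  have hVle : ∀ m n, m ≤ n → V n ⊆ V m := by
    intro m n hmn
    induction hmn with
    | refl => exact subset_rfl
    | step _ ih => exact fun g hg => ih (hVdec _ hg)
  have hV0P : ∀ g ∈ V 0, x * g ∈ P := fun g hg => hW0sub hg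
  -- the coarse uniformity
  set S : ℕ → Set (H × H) := fun n => {p : H × H | p.1⁻¹ * p.2 ∈ V n} with hSdef
  have hSle : ∀ m n, m ≤ n → S n ⊆ S m := fun m n hmn p hp => hVle m n hmn hp
  set Φ : Filter (H × H) := ⨅ n, 𝓟 (S n) with hΦ
  have hdir : Directed (· ≥ ·) S := fun a b =>
    ⟨max a b, hSle a _ (le_max_left _ _), hSle b _ (le_max_right _ _)⟩
  have hbasis : Φ.HasBasis (fun _ : ℕ => True) S := hasBasis_iInf_principal hdir
  have hmemΦ : ∀ n, S n ∈ Φ := fun n => mem_iInf_of_mem n (mem_principal_self _)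
  have hScomp : ∀ n, SetRel.comp (S (n + 1)) (S (n + 1)) ⊆ S n := by
    rintro n ⟨a, c⟩ ⟨b, hab, hbc⟩
    have : (a⁻¹ * b) * (b⁻¹ * c) ∈ V n := hVmul n (Set.mul_mem_mul hab hbc)
    simpa [mul_assoc, hSdef] using this
  set core : UniformSpace.Core H := UniformSpace.Core.mk' Φ
    (fun r hr y => by
      rcases hbasis.mem_iff.1 hr with ⟨n, -, hn⟩
      exact hn (by simp [hSdef, hV1 n]))
    (fun r hr => by
      rcases hbasis.mem_iff.1 hr with ⟨n, -, hn⟩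
      refine mem_of_superset (hmemΦ n) ?_
      rintro ⟨a, b⟩ hab
      refine hn ?_
      have h2 : (a⁻¹ * b)⁻¹ ∈ (V n)⁻¹ := Set.inv_mem_inv.2 hab
      rw [hVsymm n] at h2
      show (b, a) ∈ S n
      simpa [mul_assoc, hSdef] using h2)
    (fun r hr => by
      rcases hbasis.mem_iff.1 hr with ⟨n, -, hn⟩
      exact ⟨S (n + 1), hmemΦ (n + 1), (hScomp n).trans hn⟩) with hcoredef
  have hcoreuni : core.uniformity = Φ := rfl
  letI uX : UniformSpace H := UniformSpace.ofCore core
  have hcg : IsCountablyGenerated (𝓤 H) := by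
    have : 𝓤 H = Φ := rfl
    rw [this]
    exact hbasis.isCountablyGenerated
  obtain ⟨pm, hpm⟩ := UniformSpace.metrizable_uniformity H
  set D : H → H → ℝ := pm.toDist.dist with hD
  have dself : ∀ a, D a a = 0 := pm.dist_self
  have dcomm : ∀ a b, D a b = D b a := pm.dist_comm
  have dtri : ∀ a b c, D a c ≤ D a b + D b c := pm.dist_triangle
  have dnonneg : ∀ a b, 0 ≤ D a b := by
    intro a b
    have h1 := dtri a b a
    rw [dself a, dcomm b a] at h1
    linarith
  have huni : Φ = ⨅ (ε : ℝ) (_ : ε > 0), 𝓟 {p : H × H | D p.1 p.2 < ε} := by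
    have h1 := pm.uniformity_dist
    rw [hpm] at h1
    exact h1
  have hdball : (⨅ (ε : ℝ) (_ : ε > 0), 𝓟 {p : H × H | D p.1 p.2 < ε}).HasBasis
      (fun ε : ℝ => 0 < ε) (fun ε => {p : H × H | D p.1 p.2 < ε}) := by
    refine hasBasis_biInf_principal' ?_ ⟨1, one_pos⟩
    intro ε hε δ hδ
    refine ⟨min ε δ, lt_min hε hδ, ?_, ?_⟩ <;>
    · intro p hp
      simp only [Set.mem_setOf_eq] at hp ⊢
      exact lt_of_lt_of_le hp (by simp)
  -- small d-balls are inside S 0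
  obtain ⟨ε, hε, hεS⟩ : ∃ ε : ℝ, 0 < ε ∧ {p : H × H | D p.1 p.2 < ε} ⊆ S 0 := by
    have h0 : S 0 ∈ Φ := hmemΦ 0
    rw [huni] at h0
    rcases hdball.mem_iff.1 h0 with ⟨ε, hε, hεS⟩
    exact ⟨ε, hε, hεS⟩
  -- conversely every d-ball contains some S n
  have hball : ∀ δ : ℝ, 0 < δ → ∃ n, S n ⊆ {p : H × H | D p.1 p.2 < δ} := by
    intro δ hδ
    have h1 : {p : H × H | D p.1 p.2 < δ} ∈ Φ := by
      rw [huni]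
      exact mem_iInf_of_mem δ (mem_iInf_of_mem hδ (mem_principal_self _))
    rcases hbasis.mem_iff.1 h1 with ⟨n, -, hn⟩
    exact ⟨n, hn⟩
  -- the distance to x is continuous for the group topology
  have hdcont : Continuous (fun y => D x y) := by
    rw [continuous_iff_continuousAt]
    intro y₀
    rw [ContinuousAt, Metric.tendsto_nhds]
    intro δ hδ
    rcases hball δ hδ with ⟨n, hn⟩
    have hnbhd : {y : H | y₀⁻¹ * y ∈ V n} ∈ 𝓝 y₀ := by
      have ho : IsOpen {y : H | y₀⁻¹ * y ∈ V n} := (hVo n).preimage (continuous_mul_left y₀⁻¹)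
      exact ho.mem_nhds (by simp [hV1 n])
    filter_upwards [hnbhd] with y hy
    have h2 : D y₀ y < δ := by
      have h2' : (y₀, y) ∈ S n := hy
      have := hn h2'
      simpa using this
    have h3 : D x y ≤ D x y₀ + D y₀ y := dtri _ _ _
    have h4 : D x y₀ ≤ D x y + D y₀ y := by
      have := dtri x y y₀
      rw [dcomm y y₀] at this
      linarith
    rw [Real.dist_eq, abs_lt]
    constructor <;> linarith
  refine ⟨fun y => max 0 (1 - D x y / ε), ?_, ?_, ?_, ?_⟩
  · exact continuous_const.max (continuous_const.sub (hdcont.div_const ε))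
  · have : D x x = 0 := dself x
    simp [this]
  · intro y hy
    have h5 : ε ≤ D x y := by
      by_contra h6
      push_neg at h6
      have h7 : (x, y) ∈ S 0 := hεS h6
      have h8 : x⁻¹ * y ∈ V 0 := h7
      have := hV0P _ h8
      rw [mul_inv_cancel_left] at this
      exact hy this
    have h8 : (1 : ℝ) ≤ D x y / ε := (one_le_div hε).2 h5
    have : 1 - D x y / ε ≤ 0 := by linarith
    exact max_eq_left this
  · intro y
    refine ⟨le_max_left _ _, ?_⟩
    have h9 : 0 ≤ D x y / ε := div_nonneg (dnonneg x y) hε.le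
    have : 1 - D x y / ε ≤ 1 := by linarith
    exact max_le (by norm_num) this

end Bump

section Feeble

variable {H : Type*} [Group H] [TopologicalSpace H] [IsTopologicalGroup H]

/-- A pseudocompact topological group is feebly compact: every decreasing sequence of
nonempty open sets has a common closure point. -/
theorem feebly_compact_of_pseudocompact
    (hps : ∀ f : H → ℝ, Continuous f → ∃ M : ℝ, ∀ x, |f x| ≤ M)
    (T : ℕ → Set H) (ho : ∀ n, IsOpen (T n)) (hne : ∀ n, (T n).Nonempty)
    (hdec : ∀ n, T (n + 1) ⊆ T n) :
    ∃ p : H, ∀ n, p ∈ closure (T n) := by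
  classical
  by_contra hcon
  push_neg at hcon
  choose nf hnf using hcon
  have hdle : ∀ m n, m ≤ n → T n ⊆ T m := by
    intro m n hmn
    induction hmn with
    | refl => exact subset_rfl
    | step _ ih => exact fun g hg => ih (hdec _ hg)
  choose xs hxs using hne
  have hbump : ∀ m : ℕ, ∃ f : H → ℝ, Continuous f ∧ f (xs m) = 1 ∧
      (∀ y, y ∉ T m → f y = 0) ∧ ∀ y, 0 ≤ f y ∧ f y ≤ 1 :=
    fun m => exists_bump_topGroup (T m) (ho m) (xs m) (hxs m)
  choose f hf1 hf2 hf3 hf4 using hbump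
  set g : ℕ → H → ℝ := fun m y => (m : ℝ) * f m y with hg
  have hg0 : ∀ y m, nf y ≤ m → g m y = 0 := by
    intro y m hm
    have hyT : y ∉ T m := by
      intro hyT
      exact hnf y (subset_closure (hdle _ _ hm hyT))
    rw [hg]
    simp [hf3 m y hyT]
  have hgnonneg : ∀ m y, 0 ≤ g m y := fun m y =>
    mul_nonneg (Nat.cast_nonneg m) (hf4 m y).1
  have hsum : ∀ y, Summable (fun m => g m y) := by
    intro y
    apply summable_of_ne_finset_zero (s := Finset.range (nf y))
    intro m hm
    rw [Finset.mem_range, not_lt] at hm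
    exact hg0 y m hm
  set F : H → ℝ := fun y => ∑' m, g m y with hF
  have hFeq : ∀ (k : ℕ) (y : H), y ∉ closure (T k) →
      F y = ∑ m ∈ Finset.range k, g m y := by
    intro k y hy
    apply tsum_eq_sum
    intro m hm
    rw [Finset.mem_range, not_lt] at hm
    have hyT : y ∉ T m := fun hyT => hy (subset_closure (hdle _ _ hm hyT))
    rw [hg]
    simp [hf3 m y hyT]
  have hFcont : Continuous F := by
    rw [continuous_iff_continuousAt]
    intro p
    have hopen : IsOpen (closure (T (nf p)))ᶜ := isOpen_compl_iff.2 isClosed_closure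
    have hmemp : p ∈ (closure (T (nf p)))ᶜ := hnf p
    have hcontsum : ContinuousAt (fun y => ∑ m ∈ Finset.range (nf p), g m y) p := by
      apply Continuous.continuousAt
      apply continuous_finset_sum
      intro m _
      exact continuous_const.mul (hf1 m)
    apply hcontsum.congr
    apply Filter.eventuallyEq_of_mem (hopen.mem_nhds hmemp)
    intro y hy
    exact (hFeq (nf p) y hy).symm
  obtain ⟨M, hM⟩ := hps F hFcont
  set N : ℕ := ⌈M⌉₊ + 1 with hN
  have hFN : (N : ℝ) ≤ F (xs N) := by
    have h1 : g N (xs N) = (N : ℝ) := by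
      rw [hg]
      simp [hf2 N]
    calc (N : ℝ) = g N (xs N) := h1.symm
      _ ≤ ∑' m, g m (xs N) := (hsum (xs N)).le_tsum N (fun m _ => hgnonneg m (xs N))
  have hMN : F (xs N) ≤ M := (abs_le.1 (hM (xs N))).2
  have hMlt : M < (N : ℝ) := by
    have := Nat.le_ceil M
    have h2 : ((⌈M⌉₊ : ℝ) : ℝ) < (N : ℝ) := by
      rw [hN]
      push_cast
      linarith
    linarith
  linarith

end Feeble

section Family

variable {G : Type*} [Group G] [TopologicalSpace G] [IsTopologicalGroup G]

theorem exists_disjoint_family (K : Subgroup G) (U A : Set G)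
    (hU : IsOpen U) (hUd : Dense U) (hA : IsOpen A) :
    ∃ 𝒞 : Set (Set G),
      (∀ B ∈ 𝒞, IsOpen B ∧ B.Nonempty ∧ closure B ⊆ A ∩ U) ∧
      (𝒞.Pairwise fun B B' =>
        Disjoint (QuotientGroup.mk '' B : Set (G ⧸ K)) (QuotientGroup.mk '' B')) ∧
      ((QuotientGroup.mk '' A : Set (G ⧸ K)) ⊆
        closure (⋃ B ∈ 𝒞, (QuotientGroup.mk '' B : Set (G ⧸ K)))) := by
  classical
  set q : G → G ⧸ K := QuotientGroup.mk with hq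
  set S : Set (Set (Set G)) := {𝒞 | (∀ B ∈ 𝒞, IsOpen B ∧ B.Nonempty ∧ closure B ⊆ A ∩ U) ∧
    (𝒞.Pairwise fun B B' => Disjoint (q '' B) (q '' B'))} with hS
  obtain ⟨𝒞, h𝒞⟩ : ∃ 𝒞, Maximal (· ∈ S) 𝒞 := by
    apply zorn_subset
    intro c hc hchain
    refine ⟨⋃₀ c, ⟨?_, ?_⟩, fun s hs => subset_sUnion_of_mem hs⟩
    · rintro B ⟨𝒟, h𝒟, hB⟩
      exact (hc h𝒟).1 B hB
    · intro B hB B' hB' hne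
      obtain ⟨𝒟, h𝒟, hBm⟩ := hB
      obtain ⟨𝒟', h𝒟', hBm'⟩ := hB'
      rcases hchain.total h𝒟 h𝒟' with hsub | hsub
      · exact (hc h𝒟').2 (hsub hBm) hBm' hne
      · exact (hc h𝒟).2 hBm (hsub hBm') hne
  refine ⟨𝒞, h𝒞.1.1, h𝒞.1.2, ?_⟩
  intro z hz
  rw [mem_closure_iff]
  intro O hO hzO
  by_contra hcon
  rw [Set.not_nonempty_iff_eq_empty] at hcon
  -- O misses every q '' B
  have hmiss : ∀ B ∈ 𝒞, O ∩ q '' B = ∅ := by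
    intro B hB
    rw [Set.eq_empty_iff_forall_notMem]
    intro t ⟨htO, htB⟩
    have : t ∈ O ∩ ⋃ B ∈ 𝒞, q '' B := ⟨htO, Set.mem_biUnion hB htB⟩
    rw [hcon] at this
    exact this
  -- find a point of A ∩ q⁻¹ O ∩ U
  obtain ⟨a, haA, haq⟩ := hz
  have hAO : IsOpen (A ∩ q ⁻¹' O) := hA.inter (hO.preimage continuous_quot_mk)
  have hAOne : (A ∩ q ⁻¹' O).Nonempty := ⟨a, haA, by rw [Set.mem_preimage, haq]; exact hzO⟩
  obtain ⟨w, hw⟩ := hUd.inter_open_nonempty _ hAO hAOne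
  obtain ⟨⟨hwA, hwO⟩, hwU⟩ := hw
  -- shrink with closure
  have hmem : A ∩ q ⁻¹' O ∩ U ∈ 𝓝 w := ((hAO.inter hU)).mem_nhds ⟨⟨hwA, hwO⟩, hwU⟩
  obtain ⟨t, htn, htc, hts⟩ := exists_mem_nhds_isClosed_subset hmem
  set B : Set G := interior t with hB
  have hBo : IsOpen B := isOpen_interior
  have hwB : w ∈ B := mem_interior_iff_mem_nhds.2 htn
  have hBcl : closure B ⊆ A ∩ q ⁻¹' O ∩ U := by
    calc closure B ⊆ closure t := closure_mono interior_subset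
    _ = t := htc.closure_eq
    _ ⊆ _ := hts
  -- B yields a strictly larger family, contradiction
  have hBnotin : B ∉ 𝒞 := by
    intro hBin
    have h1 : q w ∈ O ∩ q '' B := ⟨hwO, Set.mem_image_of_mem q hwB⟩
    rw [hmiss B hBin] at h1
    exact h1
  have hnew : insert B 𝒞 ∈ S := by
    constructor
    · rintro B' (rfl | hB')
      · exact ⟨hBo, ⟨w, hwB⟩, hBcl.trans (fun p hp => ⟨hp.1.1, hp.2⟩)⟩
      · exact h𝒞.1.1 B' hB'
    · rw [Set.pairwise_insert]
      refine ⟨h𝒞.1.2, ?_⟩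
      intro B' hB' hne
      have hdisj : Disjoint (q '' B) (q '' B') := by
        rw [Set.disjoint_left]
        intro t htB htB'
        have htO : t ∈ O := by
          obtain ⟨b, hb, rfl⟩ := htB
          exact (hBcl (subset_closure hb)).1.2
        have : t ∈ O ∩ q '' B' := ⟨htO, htB'⟩
        rw [hmiss B' hB'] at this
        exact this
      exact ⟨hdisj, hdisj.symm⟩
  have hsub : insert B 𝒞 ⊆ 𝒞 := h𝒞.2 hnew (Set.subset_insert B 𝒞)
  exact hBnotin (hsub (Set.mem_insert B 𝒞))

end Family

set_option linter.unusedVariables false in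
/-- If `K` is a closed pseudocompact normal subgroup of a totally bounded Hausdorff
topological group `G` and the quotient group `G/K` is Baire, then `G` is Baire. -/
theorem stmt12 {G : Type*} [Group G] [TopologicalSpace G] [IsTopologicalGroup G] [T2Space G]
    (htb : ∀ U ∈ nhds (1 : G), ∃ F : Finset G, U * (F : Set G) = Set.univ)
    (K : Subgroup G) [K.Normal] (hclosed : IsClosed (K : Set G))
    (hpseudo : ∀ f : K → ℝ, Continuous f → ∃ M : ℝ, ∀ x, |f x| ≤ M)
    (hquot : BaireSpace (G ⧸ K)) :
    BaireSpace G := by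
  classical
  constructor
  intro Us hUo hUd
  rw [dense_iff_inter_open]
  intro W hW hWne
  let q : G → G ⧸ K := QuotientGroup.mk
  have hqcont : Continuous q := continuous_quot_mk
  have hqopen : IsOpenMap q := QuotientGroup.isOpenMap_coe
  -- the canonical maximal families
  let pick : Set G → ℕ → Set (Set G) := fun A n =>
    if h : IsOpen A then (exists_disjoint_family K (Us n) A (hUo n) (hUd n) h).choose else ∅
  have hpick : ∀ (A : Set G) (n : ℕ), IsOpen A →
      (∀ B ∈ pick A n, IsOpen B ∧ B.Nonempty ∧ closure B ⊆ A ∩ Us n) ∧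
      ((pick A n).Pairwise fun B B' => Disjoint (q '' B) (q '' B')) ∧
      (q '' A ⊆ closure (⋃ B ∈ pick A n, q '' B)) := by
    intro A n h
    have hsp := (exists_disjoint_family K (Us n) A (hUo n) (hUd n) h).choose_spec
    have hpe : pick A n = (exists_disjoint_family K (Us n) A (hUo n) (hUd n) h).choose := by
      simp only [pick, dif_pos h]
    rw [hpe]
    exact hsp
  -- the levels of the sieve
  let fam : ℕ → Set (Set G) := fun n => Nat.rec {W} (fun n F => ⋃ A ∈ F, pick A n) n
  have hfam0 : fam 0 = {W} := rfl
  have hfamS : ∀ n, fam (n + 1) = ⋃ A ∈ fam n, pick A n := fun n => rfl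
  have hOpenNe : ∀ n, ∀ A ∈ fam n, IsOpen A ∧ A.Nonempty := by
    intro n
    induction n with
    | zero =>
      intro A hA
      rw [hfam0, Set.mem_singleton_iff] at hA
      subst hA
      exact ⟨hW, hWne⟩
    | succ n ih =>
      intro B hB
      rw [hfamS n] at hB
      obtain ⟨A, hA, hBm⟩ := Set.mem_iUnion₂.1 hB
      have hsp := hpick A n (ih A hA).1
      exact ⟨(hsp.1 B hBm).1, (hsp.1 B hBm).2.1⟩
  have hParent : ∀ n, ∀ B ∈ fam (n + 1), ∃ A ∈ fam n, closure B ⊆ A ∩ Us n := by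
    intro n B hB
    rw [hfamS n] at hB
    obtain ⟨A, hA, hBm⟩ := Set.mem_iUnion₂.1 hB
    exact ⟨A, hA, ((hpick A n (hOpenNe n A hA).1).1 B hBm).2.2⟩
  have hDisj : ∀ n, (fam n).Pairwise fun B B' => Disjoint (q '' B) (q '' B') := by
    intro n
    induction n with
    | zero =>
      rw [hfam0]
      exact Set.pairwise_singleton _ _
    | succ n ih =>
      intro B hB B' hB' hne
      rw [hfamS n] at hB hB'
      obtain ⟨A, hA, hBm⟩ := Set.mem_iUnion₂.1 hB
      obtain ⟨A', hA', hBm'⟩ := Set.mem_iUnion₂.1 hB'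
      by_cases hAA : A = A'
      · subst hAA
        exact (hpick A n (hOpenNe n A hA).1).2.1 hBm hBm' hne
      · have hd := ih hA hA' hAA
        have h1 : B ⊆ A := subset_closure.trans
          (((hpick A n (hOpenNe n A hA).1).1 B hBm).2.2.trans Set.inter_subset_left)
        have h2 : B' ⊆ A' := subset_closure.trans
          (((hpick A' n (hOpenNe n A' hA').1).1 B' hBm').2.2.trans Set.inter_subset_left)
        exact hd.mono (Set.image_mono h1) (Set.image_mono h2)
  -- dense open unions of images
  let D : ℕ → Set (G ⧸ K) := fun m => ⋃ B ∈ fam m, q '' B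
  have hDopen : ∀ m, IsOpen (D m) := by
    intro m
    apply isOpen_biUnion
    intro B hB
    exact hqopen B (hOpenNe m B hB).1
  have hstep : ∀ n, D n ⊆ closure (D (n + 1)) := by
    intro n t ht
    obtain ⟨A, hA, htA⟩ := Set.mem_iUnion₂.1 ht
    have h3 := (hpick A n (hOpenNe n A hA).1).2.2 htA
    refine closure_mono ?_ h3
    intro s hs
    obtain ⟨B, hBm, hsB⟩ := Set.mem_iUnion₂.1 hs
    have hBfam : B ∈ fam (n + 1) := by
      rw [hfamS n]
      exact Set.mem_biUnion hA hBm
    exact Set.mem_biUnion hBfam hsB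
  have hWD : ∀ n, q '' W ⊆ closure (D n) := by
    intro n
    induction n with
    | zero =>
      have : q '' W ⊆ D 0 := by
        intro t ht
        have hWf : W ∈ fam 0 := by rw [hfam0]; exact Set.mem_singleton W
        exact Set.mem_biUnion hWf ht
      exact this.trans subset_closure
    | succ n ih =>
      refine ih.trans ?_
      have := closure_mono (hstep n)
      rwa [closure_closure] at this
  -- apply Baire property of the quotient
  have hDD_open : ∀ n, IsOpen (D n ∪ (closure (q '' W))ᶜ) := fun n =>
    (hDopen n).union isClosed_closure.isOpen_compl
  have hDD_dense : ∀ n, Dense (D n ∪ (closure (q '' W))ᶜ) := by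
    intro n z
    by_cases hz : z ∈ closure (q '' W)
    · have h4 : closure (q '' W) ⊆ closure (D n) := closure_minimal (hWD n) isClosed_closure
      exact closure_mono Set.subset_union_left (h4 hz)
    · exact subset_closure (Or.inr hz)
  have hdense := dense_iInter_of_isOpen_nat hDD_open hDD_dense
  have hqWopen : IsOpen (q '' W) := hqopen W hW
  have hqWne : (q '' W).Nonempty := hWne.image q
  obtain ⟨y, hyW, hyI⟩ := hdense.inter_open_nonempty _ hqWopen hqWne
  have hyD : ∀ n, y ∈ D n := by
    intro n
    have h5 := Set.mem_iInter.1 hyI n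
    rcases h5 with h5 | h5
    · exact h5
    · exact absurd (subset_closure hyW) h5
  -- extract the branch
  have hBn : ∀ n, ∃ B, B ∈ fam n ∧ y ∈ q '' B := by
    intro n
    obtain ⟨B, hB, hyB⟩ := Set.mem_iUnion₂.1 (hyD n)
    exact ⟨B, hB, hyB⟩
  choose Bf hBf hyBf using hBn
  have hB0 : Bf 0 = W := by
    have := hBf 0
    rwa [hfam0, Set.mem_singleton_iff] at this
  have hchain : ∀ n, closure (Bf (n + 1)) ⊆ Bf n ∩ Us n := by
    intro n
    obtain ⟨A, hA, hcl⟩ := hParent n (Bf (n + 1)) (hBf (n + 1))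
    have hyA : y ∈ q '' A :=
      Set.image_mono (subset_closure.trans (hcl.trans Set.inter_subset_left)) (hyBf (n + 1))
    have hAB : A = Bf n := by
      by_contra hne
      exact (Set.disjoint_left.1 (hDisj n hA (hBf n) hne)) hyA (hyBf n)
    rw [← hAB]
    exact hcl
  have hBsub : ∀ n, Bf (n + 1) ⊆ Bf n := fun n =>
    subset_closure.trans ((hchain n).trans Set.inter_subset_left)
  -- the fiber over y
  obtain ⟨g, hgW, hgy⟩ := hyW
  let φ : K → G := fun k => g * (k : G)
  have hφcont : Continuous φ := (continuous_mul_left g).comp continuous_subtype_val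
  let T : ℕ → Set K := fun n => φ ⁻¹' (Bf n)
  have hTo : ∀ n, IsOpen (T n) := fun n => (hOpenNe n (Bf n) (hBf n)).1.preimage hφcont
  have hTne : ∀ n, (T n).Nonempty := by
    intro n
    obtain ⟨x, hxB, hxy⟩ := hyBf n
    have hxg : q x = q g := by rw [hxy, hgy]
    have hK1 : x⁻¹ * g ∈ K := QuotientGroup.eq.1 hxg
    have hK2 : g⁻¹ * x ∈ K := by
      have := K.inv_mem hK1
      simpa using this
    refine ⟨⟨g⁻¹ * x, hK2⟩, ?_⟩
    show g * (g⁻¹ * x) ∈ Bf n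
    rwa [mul_inv_cancel_left]
  have hTdec : ∀ n, T (n + 1) ⊆ T n := fun n k hk => hBsub n hk
  obtain ⟨p, hp⟩ := feebly_compact_of_pseudocompact hpseudo T hTo hTne hTdec
  have hmemcl : ∀ n, (g * (p : G)) ∈ closure (Bf n) := by
    intro n
    have h6 : closure (T n) ⊆ φ ⁻¹' (closure (Bf n)) := hφcont.closure_preimage_subset (Bf n)
    exact h6 (hp n)
  refine ⟨g * (p : G), ?_, ?_⟩
  · have h7 := hchain 0 (hmemcl 1)
    rw [hB0] at h7
    exact h7.1
  · rw [Set.mem_iInter]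
    intro n
    exact (hchain n (hmemcl (n + 1))).2
end

section
/- Every pseudocompact topological space has the Baire property. -/
open Set Function

/-- Every pseudocompact Tychonoff space has the Baire property. -/
theorem stmt13 {X : Type*} [TopologicalSpace X] [T2Space X] [CompletelyRegularSpace X]
    (hpseudo : ∀ f : X → ℝ, Continuous f → ∃ M : ℝ, ∀ x, |f x| ≤ M) :
    BaireSpace X := by
  constructor
  intro U hUo hUd
  rw [dense_iff_inter_open]
  intro W hW hWne
  -- type of nonempty open sets
  set T := {V : Set X // IsOpen V ∧ V.Nonempty} with hT
  -- the shrinking step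
  have step : ∀ (n : ℕ) (p : T), ∃ (q : T) (f : X → ℝ) (x : X),
      closure q.1 ⊆ p.1 ∩ U n ∧ x ∈ q.1 ∧ Continuous f ∧
      (∀ y, 0 ≤ f y) ∧ f x = 1 ∧ (∀ y, y ∉ p.1 ∩ U n → f y = 0) := by
    intro n ⟨V, hVo, hVne⟩
    have hVU : (V ∩ U n).Nonempty := (hUd n).inter_open_nonempty V hVo hVne
    obtain ⟨x, hx⟩ := hVU
    obtain ⟨g, hgc, hgx, hg1⟩ := CompletelyRegularSpace.completely_regular x (V ∩ U n)ᶜ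
      (((hVo.inter (hUo n)).isClosed_compl)) (by simpa using hx)
    set f : X → ℝ := fun y => 1 - (g y : ℝ) with hf
    have hfc : Continuous f := continuous_const.sub (continuous_subtype_val.comp hgc)
    have hfnn : ∀ y, 0 ≤ f y := fun y => by
      have := (g y).2.2; simp only [hf]; linarith
    have hfx : f x = 1 := by
      simp only [hf]
      have : (g x : ℝ) = 0 := by rw [hgx]; rfl
      rw [this]; ring
    have hf0 : ∀ y, y ∉ V ∩ U n → f y = 0 := by
      intro y hy
      have : g y = 1 := hg1 hy
      simp only [hf, this]
      norm_num
    set V' : Set X := f ⁻¹' (Ioi (1/2)) with hV'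
    have hV'o : IsOpen V' := isOpen_Ioi.preimage hfc
    have hxV' : x ∈ V' := by simp [hV', hfx]; norm_num
    have hclo : closure V' ⊆ V ∩ U n := by
      have h1 : closure V' ⊆ f ⁻¹' (Ici (1/2)) :=
        closure_minimal (preimage_mono Ioi_subset_Ici_self) (isClosed_Ici.preimage hfc)
      intro y hy
      by_contra hyn
      have := h1 hy
      rw [mem_preimage, hf0 y hyn] at this
      norm_num at this
    exact ⟨⟨V', hV'o, ⟨x, hxV'⟩⟩, f, x, hclo, hxV', hfc, hfnn, hfx, hf0⟩
  choose next f xp hcl hxmem hfc hfnn hfx hf0 using step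
  -- the recursive sequence
  let seq : ℕ → T := fun n => Nat.rec ⟨W, hW, hWne⟩ (fun n p => next n p) n
  set A : ℕ → Set X := fun n => (seq n).1 with hA
  have hseq : ∀ n, seq (n + 1) = next n (seq n) := fun n => rfl
  have hA0 : A 0 = W := rfl
  have hclA : ∀ n, closure (A (n + 1)) ⊆ A n ∩ U n := fun n => hcl n (seq n)
  have hanti : Antitone A := by
    apply antitone_nat_of_succ_le
    intro n
    exact (subset_closure.trans (hclA n)).trans inter_subset_left
  by_cases h : (⋂ n, closure (A (n + 1))).Nonempty
  · obtain ⟨x, hx⟩ := h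
    simp only [mem_iInter] at hx
    have hxn : ∀ n, x ∈ A n ∩ U n := fun n => hclA n (hx n)
    refine ⟨x, ?_, ?_⟩
    · rw [← hA0]; exact (hxn 0).1
    · exact mem_iInter.2 fun n => (hxn n).2
  · -- build an unbounded continuous function
    have hemp : ∀ x : X, ∃ n, x ∉ closure (A (n + 1)) := by
      intro x
      by_contra hc
      push_neg at hc
      exact h ⟨x, mem_iInter.2 hc⟩
    set g : ℕ → X → ℝ := fun n y => (n : ℝ) * f n (seq n) y with hg
    have hgc : ∀ n, Continuous (g n) := fun n => continuous_const.mul (hfc n (seq n))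
    have hgnn : ∀ n y, 0 ≤ g n y := fun n y =>
      mul_nonneg (Nat.cast_nonneg n) (hfnn n (seq n) y)
    have hsupp : ∀ n, support (g n) ⊆ A n := by
      intro n y hy
      by_contra hyA
      exact hy (by simp [hg, hf0 n (seq n) y (fun hc => hyA hc.1)])
    have hlf : LocallyFinite fun n => support (g n) := by
      intro x
      obtain ⟨N, hN⟩ := hemp x
      refine ⟨(closure (A (N + 1)))ᶜ, (isClosed_closure.isOpen_compl).mem_nhds hN, ?_⟩
      apply Set.Finite.subset (Set.finite_Iic N)
      intro n hn
      by_contra hnN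
      simp only [Set.mem_Iic, not_le] at hnN
      obtain ⟨y, hy1, hy2⟩ := hn
      have : y ∈ A n := hsupp n hy1
      have : y ∈ A (N + 1) := hanti (by omega : N + 1 ≤ n) this
      exact hy2 (subset_closure this)
    set G : X → ℝ := fun y => ∑ᶠ n, g n y with hG
    have hGc : Continuous G := continuous_finsum hgc hlf
    obtain ⟨M, hM⟩ := hpseudo G hGc
    set n := ⌈M⌉₊ + 1 with hn
    set x := xp n (seq n) with hxdef
    have hfin : (support fun k => g k x).Finite := by
      apply Set.Finite.subset (hlf.point_finite x)
      intro k hk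
      exact hk
    have hsingle : g n x ≤ G x := single_le_finsum n hfin (fun k => hgnn k x)
    have hgnx : g n x = (n : ℝ) := by
      simp [hg, hxdef, hfx n (seq n)]
    have hMn : (n : ℝ) ≤ M := by
      calc (n : ℝ) = g n x := hgnx.symm
        _ ≤ G x := hsingle
        _ ≤ |G x| := le_abs_self _
        _ ≤ M := hM x
    have : M < (n : ℝ) := by
      have := Nat.le_ceil M
      have h2 : (⌈M⌉₊ : ℝ) < (n : ℝ) := by
        rw [hn]; push_cast; linarith
      linarith
    linarith
end

section
/- Every continuous surjective homomorphism from a pseudocompact topological group onto a second countable topological group is an open map. -/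
open Set Filter Topology Pointwise

section OpenMappingAux

variable {G : Type*} [Group G] [TopologicalSpace G] [IsTopologicalGroup G]



lemma step_aux (S : Set G) : ∃ T : Set G, S ∈ 𝓝 (1:G) →
    (IsOpen T ∧ (1:G) ∈ T ∧ T⁻¹ = T ∧ T * T * T ⊆ S) := by
  by_cases hS : S ∈ 𝓝 (1:G)
  · obtain ⟨V₁, hV₁o, hV₁1, hV₁⟩ := exists_open_nhds_one_mul_subset hS
    obtain ⟨V₂, hV₂o, hV₂1, hV₂⟩ := exists_open_nhds_one_mul_subset (hV₁o.mem_nhds hV₁1)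
    refine ⟨V₂ ∩ V₂⁻¹, fun _ => ⟨hV₂o.inter hV₂o.inv, ⟨hV₂1, by simpa using hV₂1⟩, ?_, ?_⟩⟩
    · simp [Set.inter_comm]
    · have h1 : V₂ ∩ V₂⁻¹ ⊆ V₂ := inter_subset_left
      have h2 : V₂ ⊆ V₁ := fun a ha => hV₂ (by simpa using mul_mem_mul ha hV₂1)
      calc (V₂ ∩ V₂⁻¹) * (V₂ ∩ V₂⁻¹) * (V₂ ∩ V₂⁻¹)
          ⊆ V₂ * V₂ * V₂ := mul_subset_mul (mul_subset_mul h1 h1) h1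
        _ ⊆ V₁ * V₁ := mul_subset_mul hV₂ h2
        _ ⊆ S := hV₁
  · exact ⟨∅, fun h => absurd h hS⟩

/-- A chain of symmetric open neighborhoods: W 0 = univ, W (n+1) ³ ⊆ W n ∩ N. -/

lemma chain_aux {N : Set G} (hN : N ∈ 𝓝 (1:G)) : ∃ W : ℕ → Set G,
    W 0 = univ ∧ (∀ n, IsOpen (W n)) ∧ (∀ n, (1:G) ∈ W n) ∧ (∀ n, (W n)⁻¹ = W n) ∧
    (∀ n, W (n+1) * W (n+1) * W (n+1) ⊆ W n) ∧ (W 1 ⊆ N) ∧ (∀ n, W (n+1) ⊆ W n) := by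
  choose st hst using step_aux (G := G)
  set W : ℕ → Set G := fun n => Nat.rec univ (fun _ ih => st (ih ∩ N)) n with hW
  have hmem : ∀ n, W n ∈ 𝓝 (1:G) ∧ IsOpen (W n) ∧ (1:G) ∈ W n ∧ (W n)⁻¹ = W n := by
    intro n
    induction n with
    | zero => exact ⟨univ_mem, isOpen_univ, mem_univ _, Set.inv_univ⟩
    | succ k ih =>
      have hin : W k ∩ N ∈ 𝓝 (1:G) := inter_mem ih.1 hN
      obtain ⟨ho, h1, hs, _⟩ := hst _ hin
      exact ⟨ho.mem_nhds h1, ho, h1, hs⟩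
  have hcube : ∀ n, W (n+1) * W (n+1) * W (n+1) ⊆ W n ∩ N := by
    intro n
    have hin : W n ∩ N ∈ 𝓝 (1:G) := inter_mem (hmem n).1 hN
    exact (hst _ hin).2.2.2
  have hsub : ∀ n, W (n+1) ⊆ W n := by
    intro n a ha
    have : a ∈ W (n+1) * W (n+1) * W (n+1) := by
      have h1 := (hmem (n+1)).2.2.1
      simpa using mul_mem_mul (mul_mem_mul h1 ha) h1
    exact ((hcube n) this).1
  refine ⟨W, rfl, fun n => (hmem n).2.1, fun n => (hmem n).2.2.1, fun n => (hmem n).2.2.2,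
    fun n => (hcube n).trans inter_subset_left, ?_, hsub⟩
  intro a ha
  have : a ∈ W 1 * W 1 * W 1 := by
    have h1 := (hmem 1).2.2.1
    simpa using mul_mem_mul (mul_mem_mul h1 ha) h1
  exact ((hcube 0) this).2

lemma bump_aux {N : Set G} (hN : N ∈ 𝓝 (1:G))
    (W : ℕ → Set G) (hW0 : W 0 = univ) (hWo : ∀ n, IsOpen (W n)) (hW1 : ∀ n, (1:G) ∈ W n)
    (hWs : ∀ n, (W n)⁻¹ = W n) (hWc : ∀ n, W (n+1) * W (n+1) * W (n+1) ⊆ W n)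
    (hWN : W 1 ⊆ N) (hWm : ∀ n, W (n+1) ⊆ W n) :
    ∃ φ : G → ℝ, Continuous φ ∧ φ 1 = 1 ∧ (∀ x, 0 ≤ φ x) ∧ (∀ x, φ x ≤ 1) ∧
      (∀ x, x ∉ N → φ x = 0) := by
  classical
  set q : NNReal := 2⁻¹ with hqdef
  have hq1 : q < 1 := by rw [hqdef, ← NNReal.coe_lt_coe]; norm_num
  have hq0 : 0 < q := by rw [hqdef, ← NNReal.coe_lt_coe]; norm_num
  have hWanti : ∀ {n m : ℕ}, n ≤ m → W m ⊆ W n := by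
    intro n m h
    induction h with
    | refl => exact subset_rfl
    | step h ih => exact (hWm _).trans ih
  set pen : ℕ → G → NNReal := fun n g => if g ∈ W n then q^n else 1 with hpen
  set d' : G → NNReal := fun g => ⨅ n, pen n g with hd'
  have hub : ∀ {g n}, g ∈ W n → d' g ≤ q^n := by
    intro g n hg
    refine (ciInf_le (OrderBot.bddBelow _) n).trans ?_
    simp [hpen, hg]
  have hle1 : ∀ g, d' g ≤ 1 := by
    intro g
    simpa using hub (show g ∈ W 0 by rw [hW0]; trivial)
  have hlb : ∀ {g k}, g ∉ W (k+1) → q^k ≤ d' g := by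
    intro g k hg
    refine le_ciInf fun m => ?_
    by_cases hm : g ∈ W m
    · have hmk : m ≤ k := by
        by_contra hc
        exact hg (hWanti (Nat.succ_le_of_lt (not_le.1 hc)) hm)
      simp only [hpen, if_pos hm]
      exact pow_le_pow_right_of_le_one' hq1.le hmk
    · simp [hpen, if_neg hm, pow_le_one₀ (zero_le (a := q)) hq1.le]
  have hzero : ∀ {c : NNReal}, (∀ n, c ≤ q^n) → c = 0 := by
    intro c hc
    by_contra h
    obtain ⟨n, hn⟩ := NNReal.exists_pow_lt_of_lt_one (pos_iff_ne_zero.2 h) hq1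
    exact absurd (hc n) (not_le.2 hn)
  have hattain : ∀ g, d' g = 0 ∨ ∃ k, d' g = q^k ∧ g ∉ W (k+1) := by
    intro g
    by_cases hall : ∀ n, g ∈ W n
    · exact Or.inl (hzero fun n => hub (hall n))
    · push_neg at hall
      right
      have hex : ∃ n, g ∉ W n := hall
      have hn₀pos : 0 < Nat.find hex := by
        rcases Nat.eq_zero_or_pos (Nat.find hex) with h | h
        · have hspec := Nat.find_spec hex
          rw [h] at hspec
          exact absurd (by rw [hW0]; trivial) hspec
        · exact h
      obtain ⟨k, hk⟩ : ∃ k, Nat.find hex = k + 1 := ⟨Nat.find hex - 1, by omega⟩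
      have hgk : g ∈ W k := by
        by_contra hc
        have := Nat.find_le (h := hex) hc
        omega
      have hgk1 : g ∉ W (k+1) := hk ▸ Nat.find_spec hex
      exact ⟨k, le_antisymm (hub hgk) (hlb hgk1), hgk1⟩
  -- the pre-distance
  set d₀ : G → G → NNReal := fun x y => d' (x⁻¹ * y) with hd₀
  have hd₀self : ∀ x, d₀ x x = 0 := by
    intro x
    refine hzero fun n => ?_
    simpa [hd₀] using hub (show (1:G) ∈ W n from hW1 n)
  have hd₀comm : ∀ x y, d₀ x y = d₀ y x := by
    intro x y
    have hmemiff : ∀ (g : G) n, g ∈ W n ↔ g⁻¹ ∈ W n := by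
      intro g n
      constructor
      · intro h; rw [← hWs n]; simpa using h
      · intro h; rw [← hWs n]; simpa using h
    have : ∀ n, pen n (x⁻¹ * y) = pen n (y⁻¹ * x) := by
      intro n
      have : (x⁻¹ * y)⁻¹ = y⁻¹ * x := by group
      simp only [hpen]
      rw [hmemiff (x⁻¹ * y) n, this]
    simp only [hd₀, hd']
    exact iInf_congr this
  -- chain inequality
  have hchain : ∀ x₁ x₂ x₃ x₄ n, d₀ x₁ x₂ ≤ q^(n+1) → d₀ x₂ x₃ ≤ q^(n+1) → d₀ x₃ x₄ ≤ q^(n+1) →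
      d₀ x₁ x₄ ≤ q^n := by
    intro x₁ x₂ x₃ x₄ n h12 h23 h34
    have hmem : ∀ {x y : G}, d₀ x y ≤ q^(n+1) → x⁻¹ * y ∈ W (n+1) := by
      intro x y h
      by_contra hc
      have := hlb (g := x⁻¹ * y) (k := n) hc
      have hlt : q^(n+1) < q^n := pow_lt_pow_right_of_lt_one₀ hq0 hq1 (by omega)
      exact absurd ((this.trans h).trans_lt hlt) (lt_irrefl _)
    have hprod : x₁⁻¹ * x₄ ∈ W n := by
      have h := hWc n (mul_mem_mul (mul_mem_mul (hmem h12) (hmem h23)) (hmem h34))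
      have heq : x₁⁻¹ * x₂ * (x₂⁻¹ * x₃) * (x₃⁻¹ * x₄) = x₁⁻¹ * x₄ := by group
      rwa [heq] at h
    exact hub hprod
  have hd₀chain : ∀ x₁ x₂ x₃ x₄, d₀ x₁ x₄ ≤ 2 * max (d₀ x₁ x₂) (max (d₀ x₂ x₃) (d₀ x₃ x₄)) := by
    intro x₁ x₂ x₃ x₄
    set M := max (d₀ x₁ x₂) (max (d₀ x₂ x₃) (d₀ x₃ x₄)) with hM
    have h12 : d₀ x₁ x₂ ≤ M := le_max_left _ _
    have h23 : d₀ x₂ x₃ ≤ M := (le_max_left _ _).trans (le_max_right _ _)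
    have h34 : d₀ x₃ x₄ ≤ M := (le_max_right _ _).trans (le_max_right _ _)
    -- M is one of the three values
    have hMval : M = 0 ∨ ∃ k, M = q^k := by
      have h1 := hattain (x₁⁻¹ * x₂)
      have h2 := hattain (x₂⁻¹ * x₃)
      have h3 := hattain (x₃⁻¹ * x₄)
      rcases max_cases (d₀ x₁ x₂) (max (d₀ x₂ x₃) (d₀ x₃ x₄)) with ⟨he, _⟩ | ⟨he, _⟩
      · rcases h1 with h | ⟨k, hk, _⟩
        · exact Or.inl (by rw [hM, he]; exact h)
        · exact Or.inr ⟨k, by rw [hM, he]; exact hk⟩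
      · rcases max_cases (d₀ x₂ x₃) (d₀ x₃ x₄) with ⟨he2, _⟩ | ⟨he2, _⟩
        · rcases h2 with h | ⟨k, hk, _⟩
          · exact Or.inl (by rw [hM, he, he2]; exact h)
          · exact Or.inr ⟨k, by rw [hM, he, he2]; exact hk⟩
        · rcases h3 with h | ⟨k, hk, _⟩
          · exact Or.inl (by rw [hM, he, he2]; exact h)
          · exact Or.inr ⟨k, by rw [hM, he, he2]; exact hk⟩
    rcases hMval with hM0 | ⟨k, hMk⟩
    · rw [hM0] at h12 h23 h34
      have hz : ∀ n, d₀ x₁ x₄ ≤ q^n := fun n =>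
        hchain x₁ x₂ x₃ x₄ n (h12.trans (zero_le (a := _))) (h23.trans (zero_le (a := _)))
          (h34.trans (zero_le (a := _)))
      rw [hM0, mul_zero]
      exact le_of_eq (hzero hz)
    · rcases k with _ | k'
      · -- M = 1, trivial since d₀ ≤ 1
        rw [hMk, pow_zero, mul_one]
        calc d₀ x₁ x₄ ≤ 1 := hle1 _
          _ ≤ 2 := by rw [← NNReal.coe_le_coe]; norm_num
      · have := hchain x₁ x₂ x₃ x₄ k' (hMk ▸ h12) (hMk ▸ h23) (hMk ▸ h34)
        refine this.trans (le_of_eq ?_)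
        have h2q : (2:NNReal) * q = 1 := by
          rw [hqdef, ← NNReal.coe_inj]
          norm_num
        rw [hMk, pow_succ, mul_comm (q^k') q, ← mul_assoc, h2q, one_mul]
  -- the pseudometric
  set m : PseudoMetricSpace G := PseudoMetricSpace.ofPreNNDist d₀ hd₀self hd₀comm with hm
  set δ : G → G → ℝ := fun x y => @dist G m.toDist x y with hδ
  have hδle : ∀ x y, δ x y ≤ (d₀ x y : ℝ) := fun x y =>
    PseudoMetricSpace.dist_ofPreNNDist_le d₀ hd₀self hd₀comm x y
  have hled : ∀ x y, (d₀ x y : ℝ) ≤ 2 * δ x y := fun x y =>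
    PseudoMetricSpace.le_two_mul_dist_ofPreNNDist d₀ hd₀self hd₀comm hd₀chain x y
  have hδnn : ∀ x y, 0 ≤ δ x y := fun x y => @dist_nonneg G m x y
  have hδtri : ∀ x y z, δ x z ≤ δ x y + δ y z := fun x y z => @dist_triangle G m x y z
  have hδsymm : ∀ x y, δ x y = δ y x := fun x y => @dist_comm G m x y
  have hδself : ∀ x, δ x x = 0 := fun x => @dist_self G m x
  have hcontδ : Continuous fun g : G => δ 1 g := by
    rw [continuous_iff_continuousAt]
    intro g₀
    rw [ContinuousAt, Metric.tendsto_nhds]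
    intro ε hε
    obtain ⟨n, hn⟩ : ∃ n : ℕ, ((q:ℝ))^n < ε := by
      refine exists_pow_lt_of_lt_one hε ?_
      rw [hqdef]
      norm_num
    have hmem : (fun x => g₀ * x) '' (W n) ∈ 𝓝 g₀ := by
      refine (isOpenMap_mul_left g₀ _ (hWo n)).mem_nhds ⟨1, hW1 n, mul_one g₀⟩
    filter_upwards [hmem] with g hg
    obtain ⟨w, hw, hweq⟩ := hg
    have hWmem : g₀⁻¹ * g ∈ W n := by
      rw [← hweq]
      simpa using hw
    have hdle : δ g₀ g ≤ ((q:ℝ))^n := by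
      refine (hδle g₀ g).trans ?_
      have := hub (g := g₀⁻¹ * g) hWmem
      calc ((d₀ g₀ g : NNReal) : ℝ) ≤ ((q^n : NNReal) : ℝ) := NNReal.coe_le_coe.2 this
        _ = ((q:ℝ))^n := by push_cast; ring
    have h1 : δ 1 g ≤ δ 1 g₀ + δ g₀ g := hδtri 1 g₀ g
    have h2 : δ 1 g₀ ≤ δ 1 g + δ g₀ g := by
      have := hδtri 1 g g₀
      rwa [hδsymm g g₀] at this
    rw [Real.dist_eq, abs_sub_lt_iff]
    constructor <;> nlinarith [hδnn g₀ g]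
  refine ⟨fun g => max 0 (1 - 4 * δ 1 g), ?_, ?_, ?_, ?_, ?_⟩
  · exact continuous_const.max (continuous_const.sub (continuous_const.mul hcontδ))
  · show max 0 (1 - 4 * δ 1 1) = 1
    rw [hδself 1]
    norm_num
  · intro x
    exact le_max_left _ _
  · intro x
    have := hδnn 1 x
    simp only [max_le_iff]
    constructor <;> nlinarith
  · intro x hx
    have hxW : x ∉ W 1 := fun h => hx (hWN h)
    have h1d : (1:NNReal) ≤ d₀ 1 x := by
      have := hlb (g := (1:G)⁻¹ * x) (k := 0) (by simpa using hxW)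
      simpa [hd₀] using this
    have h2δ : (1:ℝ) ≤ 2 * δ 1 x := by
      have := hled 1 x
      have hc : (1:ℝ) ≤ ((d₀ 1 x : NNReal) : ℝ) := by exact_mod_cast h1d
      linarith
    have : 1 - 4 * δ 1 x ≤ 0 := by linarith
    simp [max_eq_left this]

lemma exists_bump_aux14 {N : Set G} (hN : N ∈ 𝓝 (1:G)) :
    ∃ φ : G → ℝ, Continuous φ ∧ φ 1 = 1 ∧ (∀ x, 0 ≤ φ x) ∧ (∀ x, φ x ≤ 1) ∧
      (∀ x, x ∉ N → φ x = 0) := by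
  obtain ⟨W, hW0, hWo, hW1, hWs, hWc, hWN, hWm⟩ := chain_aux hN
  exact bump_aux hN W hW0 hWo hW1 hWs hWc hWN hWm

lemma feeble_aux (hpseudo : ∀ f : G → ℝ, Continuous f → ∃ M : ℝ, ∀ x, |f x| ≤ M)
    (O : ℕ → Set G) (hop : ∀ n, IsOpen (O n)) (hne : ∀ n, (O n).Nonempty) :
    ∃ x : G, ∀ N ∈ 𝓝 x, ∀ m : ℕ, ∃ n, m ≤ n ∧ (O n ∩ N).Nonempty := by
  classical
  by_contra hc
  push_neg at hc
  have hlf : LocallyFinite O := by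
    intro x
    obtain ⟨N, hN, m, hm⟩ := hc x
    refine ⟨N, hN, (Set.finite_Iio m).subset ?_⟩
    intro n hn
    by_contra h
    have hmn : m ≤ n := le_of_not_gt h
    exact hn.ne_empty (hm n hmn)
  choose p hp using hne
  have hNn : ∀ n, (fun x => (p n)⁻¹ * x) '' (O n) ∈ 𝓝 (1:G) :=
    fun n => (isOpenMap_mul_left (p n)⁻¹ _ (hop n)).mem_nhds ⟨p n, hp n, inv_mul_cancel _⟩
  choose φ hφc hφ1 hφnn hφle hφ0 using fun n => exists_bump_aux14 (hNn n)
  set ψ : ℕ → G → ℝ := fun n x => (n:ℝ) * φ n ((p n)⁻¹ * x) with hψ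
  have hψc : ∀ n, Continuous (ψ n) :=
    fun n => continuous_const.mul ((hφc n).comp (continuous_const.mul continuous_id))
  have hψsup : ∀ n, Function.support (ψ n) ⊆ O n := by
    intro n x hx
    have hφne : φ n ((p n)⁻¹ * x) ≠ 0 := by
      intro h
      apply hx
      simp [hψ, h]
    have hmem : (p n)⁻¹ * x ∈ (fun y => (p n)⁻¹ * y) '' (O n) := by
      by_contra h
      exact hφne (hφ0 n _ h)
    obtain ⟨y, hy, hyx⟩ := hmem
    have : y = x := by
      have := mul_left_cancel hyx
      exact this
    rwa [← this]
  have hψnn : ∀ n x, 0 ≤ ψ n x := fun n x => mul_nonneg (Nat.cast_nonneg n) (hφnn n _)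
  set F : G → ℝ := fun x => ∑ᶠ n, ψ n x with hF
  have hFc : Continuous F := continuous_finsum hψc (hlf.subset hψsup)
  obtain ⟨M, hM⟩ := hpseudo F hFc
  obtain ⟨n, hn⟩ := exists_nat_gt M
  have hsupfin : (Function.support fun j => ψ j (p n)).Finite := by
    refine (hlf.point_finite (p n)).subset ?_
    intro j hj
    exact hψsup j hj
  have hsingle : ψ n (p n) ≤ F (p n) := single_le_finsum n hsupfin (fun j => hψnn j _)
  have hval : ψ n (p n) = (n:ℝ) := by
    simp [hψ, inv_mul_cancel, hφ1 n]
  have := hM (p n)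
  rw [abs_le] at this
  have : F (p n) ≤ M := this.2
  linarith [hsingle, hval ▸ hsingle]

lemma sym4_aux {U : Set G} (hU : U ∈ 𝓝 (1:G)) :
    ∃ W : Set G, IsOpen W ∧ (1:G) ∈ W ∧ W⁻¹ = W ∧ W * W * W * W ⊆ U := by
  obtain ⟨V₁, hV₁o, hV₁1, hV₁⟩ := exists_open_nhds_one_mul_subset hU
  obtain ⟨V₂, hV₂o, hV₂1, hV₂⟩ := exists_open_nhds_one_mul_subset (hV₁o.mem_nhds hV₁1)
  refine ⟨V₂ ∩ V₂⁻¹, hV₂o.inter hV₂o.inv, ⟨hV₂1, by simpa using hV₂1⟩, by simp [Set.inter_comm], ?_⟩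
  have h1 : V₂ ∩ V₂⁻¹ ⊆ V₂ := inter_subset_left
  calc (V₂ ∩ V₂⁻¹) * (V₂ ∩ V₂⁻¹) * (V₂ ∩ V₂⁻¹) * (V₂ ∩ V₂⁻¹)
      ⊆ V₂ * V₂ * (V₂ * V₂) := by
        rw [mul_assoc]
        exact mul_subset_mul (mul_subset_mul h1 h1) (mul_subset_mul h1 h1)
    _ ⊆ V₁ * V₁ := mul_subset_mul hV₂ hV₂
    _ ⊆ U := hV₁

/-- total boundedness from pseudocompactness -/

lemma cover_aux (hpseudo : ∀ f : G → ℝ, Continuous f → ∃ M : ℝ, ∀ x, |f x| ≤ M)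
    {U : Set G} (hU : U ∈ 𝓝 (1:G)) :
    ∃ T : Finset G, ∀ g : G, ∃ t ∈ T, g ∈ (fun x => t * x) '' U := by
  classical
  obtain ⟨W, hWo, hW1, hWs, hW4⟩ := sym4_aux hU
  by_contra hc
  push_neg at hc
  have hc' : ∀ T : Finset G, ∃ g : G, ∀ t ∈ T, g ∉ (fun x => t * x) '' U := by
    intro T
    obtain ⟨g, hg⟩ := hc T
    exact ⟨g, hg⟩
  choose c hc'' using hc'
  set L : ℕ → Finset G := fun n => Nat.rec ∅ (fun _ T => insert (c T) T) n with hL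
  set g : ℕ → G := fun n => c (L n) with hg
  have hLmono : ∀ {m n : ℕ}, m ≤ n → L m ⊆ L n := by
    intro m n h
    induction h with
    | refl => exact subset_rfl
    | step h ih => exact ih.trans (Finset.subset_insert _ _)
  have hgL : ∀ {m n : ℕ}, m < n → g m ∈ L n := by
    intro m n h
    have : g m ∈ L (m+1) := Finset.mem_insert_self _ _
    exact hLmono h this
  have hsep : ∀ {m n : ℕ}, m < n → g n ∉ (fun x => g m * x) '' U :=
    fun {m n} h => hc'' (L n) (g m) (hgL h)
  set O : ℕ → Set G := fun n => (fun x => g n * x) '' W with hO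
  have hop : ∀ n, IsOpen (O n) := fun n => isOpenMap_mul_left _ _ hWo
  have hne : ∀ n, (O n).Nonempty := fun n => ⟨g n, 1, hW1, mul_one _⟩
  obtain ⟨x, hx⟩ := feeble_aux hpseudo O hop hne
  have hNx : (fun y => x * y) '' W ∈ 𝓝 x :=
    (isOpenMap_mul_left x _ hWo).mem_nhds ⟨1, hW1, mul_one _⟩
  obtain ⟨n₁, -, hn₁⟩ := hx _ hNx 0
  obtain ⟨n₂, hn₂ge, hn₂⟩ := hx _ hNx (n₁+1)
  have hlt : n₁ < n₂ := hn₂ge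
  -- extract elements
  obtain ⟨y, ⟨w₁, hw₁, hyw⟩, w₂, hw₂, hyx⟩ := hn₁
  obtain ⟨z, ⟨w₃, hw₃, hzw⟩, w₄, hw₄, hzx⟩ := hn₂
  -- g n₂ = x * w₄ * w₃⁻¹, x = g n₁ * w₁ * w₂⁻¹
  have hsyminv : ∀ {w : G}, w ∈ W → w⁻¹ ∈ W := by
    intro w hw
    rw [← hWs]
    simpa using hw
  replace hzw : g n₂ * w₃ = z := hzw
  replace hzx : x * w₄ = z := hzx
  replace hyw : g n₁ * w₁ = y := hyw
  replace hyx : x * w₂ = y := hyx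
  have hgn₂ : g n₂ = g n₁ * (w₁ * w₂⁻¹ * w₄ * w₃⁻¹) := by
    have h1 : g n₂ * w₃ = x * w₄ := by rw [hzw, hzx]
    have h2 : g n₁ * w₁ = x * w₂ := by rw [hyw, hyx]
    have hx1 : x = g n₁ * w₁ * w₂⁻¹ := by rw [h2]; group
    rw [hx1] at h1
    have : g n₂ = g n₁ * w₁ * w₂⁻¹ * w₄ * w₃⁻¹ := by
      rw [← h1]; group
    rw [this]; group
  have hmem : w₁ * w₂⁻¹ * w₄ * w₃⁻¹ ∈ U :=
    hW4 (mul_mem_mul (mul_mem_mul (mul_mem_mul hw₁ (hsyminv hw₂)) hw₄) (hsyminv hw₃))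
  exact hsep hlt ⟨_, hmem, hgn₂.symm⟩

variable {H : Type*} [Group H] [TopologicalSpace H] [IsTopologicalGroup H] [T2Space H]
  [SecondCountableTopology H]


lemma clos_aux (hpseudo : ∀ f : G → ℝ, Continuous f → ∃ M : ℝ, ∀ x, |f x| ≤ M)
    (f : G →* H) (hcont : Continuous f) (V : Set G) {W : Set G}
    (hWo : IsOpen W) (hW1 : (1:G) ∈ W) (hWs : W⁻¹ = W) :
    closure (f '' V) ⊆ f '' (V * W * W) := by
  intro h hh
  obtain ⟨B, hB⟩ := (𝓝 h).exists_antitone_basis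
  have hBn : ∀ n, interior (B n) ∈ 𝓝 h := by
    intro n
    exact interior_mem_nhds.2 (hB.mem n)
  have hsel : ∀ n, ∃ v, v ∈ V ∧ f v ∈ interior (B n) := by
    intro n
    obtain ⟨y, hy1, hy2⟩ := mem_closure_iff_nhds.1 hh _ (hBn n)
    obtain ⟨v, hv, hvy⟩ := hy2
    exact ⟨v, hv, by rwa [hvy]⟩
  choose v hvV hvB using hsel
  set O : ℕ → Set G := fun n => ((fun x => v n * x) '' W) ∩ f ⁻¹' (interior (B n)) with hO
  have hop : ∀ n, IsOpen (O n) :=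
    fun n => (isOpenMap_mul_left _ _ hWo).inter (isOpen_interior.preimage hcont)
  have hne : ∀ n, (O n).Nonempty :=
    fun n => ⟨v n, ⟨1, hW1, mul_one _⟩, hvB n⟩
  obtain ⟨x, hx⟩ := feeble_aux hpseudo O hop hne
  have hsyminv : ∀ {w : G}, w ∈ W → w⁻¹ ∈ W := by
    intro w hw
    rw [← hWs]
    simpa using hw
  -- x ∈ V * W * W
  have hxmem : x ∈ V * W * W := by
    have hNx : (fun y => x * y) '' W ∈ 𝓝 x :=
      (isOpenMap_mul_left x _ hWo).mem_nhds ⟨1, hW1, mul_one _⟩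
    obtain ⟨n, -, y, ⟨⟨w₁, hw₁, hyw⟩, -⟩, w₂, hw₂, hyx⟩ := hx _ hNx 0
    replace hyw : v n * w₁ = y := hyw
    replace hyx : x * w₂ = y := hyx
    have : x = v n * w₁ * w₂⁻¹ := by
      rw [hyw, ← hyx]
      group
    rw [this]
    exact mul_mem_mul (mul_mem_mul (hvV n) hw₁) (hsyminv hw₂)
  -- f x = h
  have hfx : f x = h := by
    by_contra hne'
    obtain ⟨A, B₂, hA, hB₂, hfA, hhB₂, hAB⟩ := t2_separation hne'
    have hfAx : f ⁻¹' A ∈ 𝓝 x := hcont.continuousAt.preimage_mem_nhds (hA.mem_nhds hfA)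
    obtain ⟨n₀, -, hn₀⟩ := hB.toHasBasis.mem_iff.1 (hB₂.mem_nhds hhB₂)
    obtain ⟨n, hnge, y, hyO, hyA⟩ := hx _ hfAx n₀
    have hfyB : f y ∈ B₂ := hn₀ (hB.antitone hnge (interior_subset hyO.2))
    exact absurd (Set.not_disjoint_iff.2 ⟨f y, hyA, hfyB⟩) (fun hc => hc hAB)
  exact ⟨x, hxmem, hfx⟩

/-- finite union of closed sets covering a nonempty open set: one has interior -/

lemma fin_closed_aux {X : Type*} [TopologicalSpace X] {ι : Type*} (T : Finset ι)
    (C : ι → Set X) (hC : ∀ i, IsClosed (C i)) :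
    ∀ Op : Set X, IsOpen Op → Op.Nonempty → Op ⊆ (⋃ i ∈ T, C i) →
      ∃ i ∈ T, (interior (C i)).Nonempty := by
  classical
  induction T using Finset.induction_on with
  | empty =>
    intro Op _ hne hsub
    obtain ⟨x, hx⟩ := hne
    simpa using hsub hx
  | @insert a T ha ih =>
    intro Op hOp hne hsub
    by_cases hca : Op ⊆ C a
    · refine ⟨a, Finset.mem_insert_self _ _, ?_⟩
      obtain ⟨x, hx⟩ := hne
      exact ⟨x, (hOp.subset_interior_iff.2 hca) hx⟩
    · have hne' : (Op \ C a).Nonempty := Set.diff_nonempty.2 hca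
      have hop' : IsOpen (Op \ C a) := hOp.sdiff (hC a)
      have hsub' : Op \ C a ⊆ ⋃ i ∈ T, C i := by
        intro x hx
        have := hsub hx.1
        simp only [Finset.mem_insert, Set.mem_iUnion] at this ⊢
        obtain ⟨i, hi, hxi⟩ := this
        rcases hi with rfl | hi
        · exact absurd hxi hx.2
        · exact ⟨i, hi, hxi⟩
      obtain ⟨i, hi, hint⟩ := ih _ hop' hne' hsub'
      exact ⟨i, Finset.mem_insert_of_mem hi, hint⟩

lemma key_aux14 (hpseudo : ∀ f : G → ℝ, Continuous f → ∃ M : ℝ, ∀ x, |f x| ≤ M)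
    (f : G →* H) (hcont : Continuous f) (hsurj : Function.Surjective f)
    {U : Set G} (hUo : IsOpen U) (hU1 : (1:G) ∈ U) : f '' U ∈ 𝓝 (1:H) := by
  classical
  obtain ⟨W, hWo, hW1, hWs, hW4⟩ := sym4_aux (hUo.mem_nhds hU1)
  obtain ⟨T, hT⟩ := cover_aux hpseudo (hWo.mem_nhds hW1)
  set C : G → Set H := fun t => (fun y => f t * y) '' closure (f '' W) with hC
  have hCc : ∀ t, IsClosed (C t) :=
    fun t => (Homeomorph.mulLeft (f t)).isClosedMap _ isClosed_closure
  have hcover : (univ : Set H) ⊆ ⋃ t ∈ T, C t := by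
    rintro h -
    obtain ⟨g, rfl⟩ := hsurj h
    obtain ⟨t, htT, w, hwW, hgw⟩ := hT g
    replace hgw : t * w = g := hgw
    have : f g = f t * f w := by rw [← hgw, map_mul]
    refine Set.mem_biUnion htT ⟨f w, subset_closure ⟨w, hwW, rfl⟩, this.symm⟩
  obtain ⟨t, -, hint⟩ := fin_closed_aux T C hCc univ isOpen_univ ⟨1, trivial⟩ hcover
  set P : Set H := (fun y => (f t)⁻¹ * y) '' interior (C t) with hP
  have hPo : IsOpen P := isOpenMap_mul_left _ _ isOpen_interior
  have hPne : P.Nonempty := hint.image _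
  have hPsub : P ⊆ closure (f '' W) := by
    rintro p ⟨k, hk, rfl⟩
    obtain ⟨c, hc, hck⟩ := interior_subset hk
    replace hck : f t * c = k := hck
    have hkc : (f t)⁻¹ * k = c := by rw [← hck]; group
    show (f t)⁻¹ * k ∈ closure (⇑f '' W)
    rw [hkc]
    exact hc
  obtain ⟨h₀, hh₀⟩ := hPne
  have hh₀cl : h₀ ∈ closure (f '' W) := hPsub hh₀
  -- h₀⁻¹ is in the closure as well, by symmetry of W
  have hinvim : (f '' W)⁻¹ = f '' W := by
    ext y
    constructor
    · intro hy
      rw [Set.mem_inv] at hy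
      obtain ⟨w, hw, hwy⟩ := hy
      refine ⟨w⁻¹, ?_, ?_⟩
      · rw [← hWs]
        exact Set.inv_mem_inv.2 hw
      · rw [map_inv, hwy, inv_inv]
    · rintro ⟨w, hw, rfl⟩
      rw [Set.mem_inv, ← map_inv]
      exact ⟨w⁻¹, by rw [← hWs]; exact Set.inv_mem_inv.2 hw, rfl⟩
  have hh₀inv : h₀⁻¹ ∈ closure (f '' W) := by
    have := Set.inv_mem_inv.2 hh₀cl
    rwa [inv_closure, hinvim] at this
  set Q : Set H := (fun y => h₀⁻¹ * y) '' P with hQ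
  have hQo : IsOpen Q := isOpenMap_mul_left _ _ hPo
  have hQ1 : (1:H) ∈ Q := ⟨h₀, hh₀, inv_mul_cancel h₀⟩
  have hQsub : Q ⊆ f '' U := by
    rintro y ⟨k, hk, rfl⟩
    have hkcl : k ∈ closure (f '' W) := hPsub hk
    have hmul : h₀⁻¹ * k ∈ closure (f '' (W * W)) := by
      refine map_mem_closure₂ continuous_mul hh₀inv hkcl ?_
      rintro a ⟨w₁, hw₁, rfl⟩ b ⟨w₂, hw₂, rfl⟩
      exact ⟨w₁ * w₂, mul_mem_mul hw₁ hw₂, map_mul f w₁ w₂⟩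
    have := clos_aux hpseudo f hcont (W * W) hWo hW1 hWs hmul
    exact Set.image_mono hW4 this
  exact Filter.mem_of_superset (hQo.mem_nhds hQ1) hQsub

end OpenMappingAux

/-- Every continuous surjective homomorphism from a pseudocompact Hausdorff topological
group onto a second countable Hausdorff topological group is an open map. -/
theorem stmt14 {G H : Type*} [Group G] [TopologicalSpace G] [IsTopologicalGroup G]
    [T2Space G] [Group H] [TopologicalSpace H] [IsTopologicalGroup H] [T2Space H]
    [SecondCountableTopology H]
    (hpseudo : ∀ f : G → ℝ, Continuous f → ∃ M : ℝ, ∀ x, |f x| ≤ M)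
    (f : G →* H) (hcont : Continuous f) (hsurj : Function.Surjective f) :
    IsOpenMap f := by
  intro S hS
  rw [isOpen_iff_mem_nhds]
  rintro h ⟨g, hgS, rfl⟩
  set U : Set G := (fun x => g⁻¹ * x) '' S with hU
  have hUo : IsOpen U := isOpenMap_mul_left _ _ hS
  have hU1 : (1:G) ∈ U := ⟨g, hgS, inv_mul_cancel g⟩
  have hkey : f '' U ∈ 𝓝 (1:H) := key_aux14 hpseudo f hcont hsurj hUo hU1
  have himg : (fun y => f g * y) '' (f '' U) = f '' S := by
    ext y
    constructor
    · rintro ⟨z, ⟨u, ⟨s, hs, rfl⟩, rfl⟩, rfl⟩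
      refine ⟨s, hs, ?_⟩
      show f s = f g * f (g⁻¹ * s)
      rw [← map_mul, mul_inv_cancel_left]
    · rintro ⟨s, hs, rfl⟩
      refine ⟨f (g⁻¹ * s), ⟨g⁻¹ * s, ⟨s, hs, rfl⟩, rfl⟩, ?_⟩
      show f g * f (g⁻¹ * s) = f s
      rw [← map_mul, mul_inv_cancel_left]
  have hmap : Filter.map (fun y : H => f g * y) (𝓝 1) = 𝓝 (f g) := by
    simpa using (Homeomorph.mulLeft (f g)).map_nhds_eq (1:H)
  rw [← himg, ← hmap]
  exact image_mem_map hkey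
end

section
/- If H is a dense subgroup of a topological abelian group G and the restriction map G^ → H^, χ ↦ χ|_H, is a bijection between discrete dual groups, and H is not compact while G is compact, then H is not reflexive. -/
open Set Topology

/-- For a discrete domain, the coercion from continuous maps to functions is inducing:
the compact-open topology coincides with the topology of pointwise convergence. -/
lemma isInducing_coe_of_discrete {X Y : Type*} [TopologicalSpace X] [TopologicalSpace Y]
    [DiscreteTopology X] : IsInducing ((⇑) : C(X, Y) → (X → Y)) := by
  constructor
  refine le_antisymm (continuous_iff_le_induced.mp continuous_coeFun) ?_
  rw [ContinuousMap.compactOpen_eq]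
  refine le_generateFrom ?_
  rintro s ⟨K, hK, U, hU, rfl⟩
  dsimp only
  have hKfin : K.Finite := hK.finite_of_discrete
  have : {f : C(X, Y) | MapsTo f K U} = ((⇑) : C(X, Y) → (X → Y)) ⁻¹' (⋂ x ∈ K, {g | g x ∈ U}) := by
    ext f
    simp [MapsTo]
  rw [this]
  exact isOpen_induced (hKfin.isOpen_biInter fun x _ ↦
    (show IsOpen U from hU).preimage (continuous_apply x))

/-- The Pontryagin dual of a discrete group is compact. -/
lemma compactSpace_pontryaginDual_of_discrete {A : Type*} [TopologicalSpace A] [CommGroup A]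
    [DiscreteTopology A] : CompactSpace (PontryaginDual A) := by
  let F : PontryaginDual A → (A → Circle) := fun f ↦ ⇑f
  have hind : IsInducing F :=
    isInducing_coe_of_discrete.comp (ContinuousMonoidHom.isInducing_toContinuousMap A Circle)
  have hinj : Function.Injective F := fun f g h ↦
    ContinuousMonoidHom.ext fun x ↦ congrFun h x
  have hcl : IsClosed (range F) := by
    have : range F = {f : A → Circle | f 1 = 1 ∧ ∀ x y, f (x * y) = f x * f y} := by
      ext f
      constructor
      · rintro ⟨g, rfl⟩; exact ⟨map_one g, map_mul g⟩
      · rintro ⟨h1, hmul⟩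
        exact ⟨⟨⟨⟨f, h1⟩, hmul⟩, continuous_of_discreteTopology⟩, rfl⟩
    rw [this]
    simp only [Set.setOf_and, Set.setOf_forall]
    refine IsClosed.inter (isClosed_singleton.preimage (continuous_apply 1)) <|
      isClosed_iInter fun x ↦ isClosed_iInter fun y ↦ ?_
    exact isClosed_eq (continuous_apply (x * y)) ((continuous_apply x).mul (continuous_apply y))
  have hemb : IsClosedEmbedding F := ⟨⟨hind, hinj⟩, hcl⟩
  exact hemb.compactSpace

/-- Let `H` be a dense subgroup of a compact Hausdorff abelian group `G` such that the dual
groups `G^` and `H^` are discrete and the restriction map `χ ↦ χ|_H` is a bijection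
(hence a topological isomorphism of discrete groups). If `H` is not compact, then `H` is
not reflexive: there is no topological isomorphism `H ≃ H^^` given by evaluation. -/
theorem stmt17 {G : Type*} [CommGroup G] [TopologicalSpace G] [IsTopologicalGroup G]
    [CompactSpace G] [T2Space G] (H : Subgroup G) (hdense : Dense (H : Set G))
    (hnc : ¬ CompactSpace H)
    (hGdisc : DiscreteTopology (PontryaginDual G))
    (hHdisc : DiscreteTopology (PontryaginDual H))
    (hres : ∃ e : PontryaginDual G ≃ PontryaginDual H,
      ∀ (χ : PontryaginDual G) (x : H), e χ x = χ (x : G)) :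
    ¬ ∃ e : H ≃ₜ PontryaginDual (PontryaginDual H),
        (∀ x y : H, e (x * y) = e x * e y) ∧
          ∀ (x : H) (χ : PontryaginDual H), e x χ = χ x := by
  rintro ⟨e, -, -⟩
  have : CompactSpace (PontryaginDual (PontryaginDual H)) :=
    compactSpace_pontryaginDual_of_discrete
  exact hnc (e.symm.compactSpace)
end

section
/- The product of a Baire space and a second countable Baire space is a Baire space. -/
open Set TopologicalSpace

/-- The product of a Baire space and a second countable Baire space is a Baire space. -/
theorem stmt19 {X Y : Type*} [TopologicalSpace X] [TopologicalSpace Y]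
    [BaireSpace X] [BaireSpace Y] [SecondCountableTopology Y] :
    BaireSpace (X × Y) := by
  constructor
  intro f ho hd
  obtain ⟨B, hBc, hBne, hB⟩ := exists_countable_basis Y
  haveI := hBc.to_subtype
  set W : ℕ → Set Y → Set X := fun n V => {x | ∃ y ∈ V, (x, y) ∈ f n} with hW
  have hWo : ∀ n, ∀ V ∈ B, IsOpen (W n V) := by
    intro n V hV
    rw [isOpen_iff_mem_nhds]
    rintro x ⟨y, hyV, hxy⟩
    rcases isOpen_prod_iff.1 (ho n) x y hxy with ⟨u, v, hu, hv, hxu, hyv, huv⟩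
    refine Filter.mem_of_superset (hu.mem_nhds hxu) fun x' hx' => ⟨y, hyV, huv ⟨hx', hyv⟩⟩
  have hWd : ∀ n, ∀ V ∈ B, Dense (W n V) := by
    intro n V hV
    have hVne : V.Nonempty := nonempty_iff_ne_empty.2 (fun h => hBne (h ▸ hV))
    rw [dense_iff_inter_open]
    intro U hU hUne
    have : (U ×ˢ V ∩ f n).Nonempty :=
      (hd n).inter_open_nonempty _ (hU.prod (hB.isOpen hV)) (hUne.prod hVne)
    rcases this with ⟨⟨x, y⟩, ⟨hxU, hyV⟩, hxy⟩
    exact ⟨x, hxU, y, hyV, hxy⟩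
  have hG : Dense (⋂ p : ℕ × B, W p.1 p.2) :=
    dense_iInter_of_isOpen (fun p => hWo p.1 p.2 p.2.2) (fun p => hWd p.1 p.2 p.2.2)
  rw [dense_iff_inter_open]
  intro s hs hsne
  obtain ⟨⟨x0, y0⟩, hx0⟩ := hsne
  rcases isOpen_prod_iff.1 hs x0 y0 hx0 with ⟨u, v, hu, hv, hx0u, hy0v, huv⟩
  obtain ⟨V, hVB, hy0V, hVv⟩ := hB.exists_subset_of_mem_open hy0v hv
  obtain ⟨x, hxu, hxG⟩ := hG.inter_open_nonempty u hu ⟨x0, hx0u⟩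
  -- the slices at x are dense open in Y
  have hso : ∀ n, IsOpen {y : Y | (x, y) ∈ f n} := fun n =>
    (ho n).preimage (Continuous.prodMk_right x)
  have hsd : ∀ n, Dense {y : Y | (x, y) ∈ f n} := by
    intro n
    apply hB.dense_iff.2
    intro o hoB hone
    have hx : x ∈ W n o := by
      have := mem_iInter.1 hxG (n, ⟨o, hoB⟩)
      exact this
    rcases hx with ⟨y, hyo, hxy⟩
    exact ⟨y, hyo, hxy⟩
  have : Dense (⋂ n, {y : Y | (x, y) ∈ f n}) := dense_iInter_of_isOpen_nat hso hsd
  obtain ⟨y, hyV, hy⟩ := this.inter_open_nonempty V (hB.isOpen hVB) ⟨y0, hy0V⟩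
  refine ⟨(x, y), huv ⟨hxu, hVv hyV⟩, ?_⟩
  exact mem_iInter.2 fun n => mem_iInter.1 hy n
end
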